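/- arXiv:2601.09308 — 3 statements merged into one kernel-verified Lean document; each statement's English description precedes it below -/
import Mathlib

section
/- Let ν be a finite measure on (Ω, 𝒜) and let μ = ν.withDensity ρ be a finite measure with D(μ‖ν) < ∞ and total mass k := μ(Ω) > 0. Let F_1 ⊆ F_2 ⊆ ⋯ ⊆ F_n be sub-σ-algebras of 𝒜, let Y_j be a conditional density of μ given F_j with respect to ν, set μ_j := ν.withDensity Y_j, and for 1 ≤ m ≤ n set Y_{m,n}^max := max_{m ≤ j ≤ n} Y_j and Y_{m,n}^min := min_{m ≤ j ≤ n} Y_j. Then d(k ‖ ∫ Y_{m,n}^max dν) ≤ D(μ_n‖μ_m) and d(k ‖ ∫ Y_{m,n}^min dν) ≤ D(μ_n‖μ_m), where d(a‖b) := a·ln(a/b) − (a − b) for a, b > 0. -/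
open MeasureTheory Filter Topology ENNReal

open Classical in
/-- Information divergence `D(μ‖ν)`: if `μ ≪ ν` it is `∫ (ρ ln ρ − ρ + 1) dν` where
`ρ` is the density of `μ` with respect to `ν`, and `∞` otherwise. -/
noncomputable def infoDiv {Ω : Type*} [MeasurableSpace Ω] (μ ν : Measure Ω) : ℝ≥0∞ :=
  if μ ≪ ν then
    ∫⁻ x, ENNReal.ofReal ((μ.rnDeriv ν x).toReal * Real.log (μ.rnDeriv ν x).toReal
      - (μ.rnDeriv ν x).toReal + 1) ∂ν
  else ∞

/-- The scalar divergence `d(a‖b) = a·ln(a/b) − (a − b)` of two positive reals. -/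
noncomputable def scalarDiv (a b : ℝ) : ℝ := a * Real.log (a / b) - (a - b)


lemma aux_log_ge {a u : ℝ} (ha : 0 < a) (hu : 0 < u) : a - u ≤ a * Real.log (a / u) := by
  have h := Real.log_le_sub_one_of_pos (x := u / a) (div_pos hu ha)
  have h2 : a * Real.log (u / a) ≤ a * (u / a - 1) := mul_le_mul_of_nonneg_left h ha.le
  have h3 : a * (u / a) = u := by field_simp
  have h4 : Real.log (a / u) = - Real.log (u / a) := by
    rw [← Real.log_inv]; congr 1; field_simp
  rw [h4]; nlinarith [h2, h3]

lemma aux_log_le {u v : ℝ} (hu : 0 ≤ u) (hv : 0 < v) : u * Real.log (v / u) ≤ v - u := by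
  rcases eq_or_lt_of_le hu with h0 | h0
  · simp [← h0]; positivity
  · have h := Real.log_le_sub_one_of_pos (x := v / u) (div_pos hv h0)
    have h2 : u * Real.log (v / u) ≤ u * (v / u - 1) := mul_le_mul_of_nonneg_left h h0.le
    have h3 : u * (v / u) = v := by field_simp
    nlinarith [h2, h3]

lemma phi_nonneg {r : ℝ} (hr : 0 ≤ r) : 0 ≤ r * Real.log r - r + 1 := by
  rcases eq_or_lt_of_le hr with h0 | h0
  · simp [← h0]
  · have := aux_log_ge h0 one_pos
    simp only [div_one] at this
    linarith

lemma core_max {a b c t : ℝ} (ha : 0 ≤ a) (hac : a ≤ c) (hbc : b ≤ c)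
    (ht : 0 < t) (ht1 : t ≤ 1) (hb : 0 ≤ b) (hz : b = 0 → a = 0) :
    a * Real.log (c / b) + b
      ≤ b * ((a/b) * Real.log (a/b) - (a/b) + 1) + (t * c + a * Real.log t⁻¹) := by
  rcases eq_or_lt_of_le hb with hb0 | hb0
  · have ha0 : a = 0 := hz hb0.symm
    have hc : 0 ≤ c := le_trans ha hac
    rw [ha0, ← hb0]; simp
    exact mul_nonneg ht.le hc
  · have hbφ : b * ((a/b) * Real.log (a/b) - (a/b) + 1) = a * Real.log (a/b) - a + b := by
      field_simp; try ring
    rw [hbφ]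
    rcases eq_or_lt_of_le ha with ha0 | ha0
    · have hc : 0 ≤ c := le_trans ha hac
      rw [← ha0]; simp
      have : 0 ≤ t * c := mul_nonneg ht.le hc
      have h2 : 0 ≤ a * Real.log t⁻¹ := by rw [← ha0]; simp
      nlinarith
    · have hc : 0 < c := lt_of_lt_of_le ha0 hac
      rw [Real.log_div (ne_of_gt ha0) (ne_of_gt hb0), Real.log_div (ne_of_gt hc) (ne_of_gt hb0),
        Real.log_inv]
      have key : a - t*c ≤ a * Real.log (a / (t*c)) := aux_log_ge ha0 (by positivity)
      rw [Real.log_div (ne_of_gt ha0) (by positivity), Real.log_mul (ne_of_gt ht) (ne_of_gt hc),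
        mul_sub] at key
      ring_nf at key ⊢
      nlinarith [key]

lemma core_min {a b t ε be ce : ℝ} (ha : 0 ≤ a) (hb : 0 ≤ b) (hz : b = 0 → a = 0)
    (ht : 1 ≤ t) (hε : 0 < ε) (hce : ε ≤ ce) (hcb : ce ≤ be) (hbe : be = max b ε) :
    a * Real.log t + b
      ≤ b * ((a/b) * Real.log (a/b) - (a/b) + 1) + (a * Real.log (be / ce) + t * ce) := by
  have hce0 : 0 < ce := lt_of_lt_of_le hε hce
  have hbe0 : 0 < be := lt_of_lt_of_le hce0 hcb
  have ht0 : 0 < t := lt_of_lt_of_le one_pos ht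
  rcases eq_or_lt_of_le hb with hb0 | hb0
  · have ha0 : a = 0 := hz hb0.symm
    rw [ha0, ← hb0]; simp
    exact mul_nonneg ht0.le hce0.le
  · have hbφ : b * ((a/b) * Real.log (a/b) - (a/b) + 1) = a * Real.log (a/b) - a + b := by
      field_simp; try ring
    rw [hbφ]
    rcases eq_or_lt_of_le ha with ha0 | ha0
    · rw [← ha0]; simp
      have : 0 ≤ t * ce := mul_nonneg ht0.le hce0.le
      have h2 : 0 ≤ Real.log (be/ce) := Real.log_nonneg ((one_le_div hce0).2 hcb)
      nlinarith
    · have hble : b ≤ be := hbe ▸ le_max_left _ _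
      have key : a - t*ce ≤ a * Real.log (a / (t*ce)) := aux_log_ge ha0 (by positivity)
      rw [Real.log_div (ne_of_gt ha0) (by positivity), Real.log_mul (ne_of_gt ht0) (ne_of_gt hce0),
        mul_sub] at key
      have hlog : Real.log b ≤ Real.log be := Real.log_le_log hb0 hble
      rw [Real.log_div (ne_of_gt ha0) (ne_of_gt hb0), Real.log_div (ne_of_gt hbe0) (ne_of_gt hce0)]
      have hmul : a * Real.log b ≤ a * Real.log be := mul_le_mul_of_nonneg_left hlog ha0.le
      ring_nf at key ⊢
      nlinarith [key, hmul]

lemma mart_eq {Ω : Type*} [mΩ : MeasurableSpace Ω] (ν : Measure Ω)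
    (G : MeasurableSpace Ω) (hG : G ≤ mΩ)
    (Y₁ Y₂ : Ω → ℝ≥0∞) (hY₁ : Measurable[mΩ] Y₁) (hY₂ : Measurable[mΩ] Y₂)
    (heq : ∀ A : Set Ω, MeasurableSet[G] A → ∫⁻ x in A, Y₁ x ∂ν = ∫⁻ x in A, Y₂ x ∂ν)
    (H : Ω → ℝ≥0∞) (hH : Measurable[G] H) :
    ∫⁻ x, Y₁ x * H x ∂ν = ∫⁻ x, Y₂ x * H x ∂ν := by
  have hHm : Measurable[mΩ] H := hH.mono hG le_rfl
  have h1 : ∫⁻ x, Y₁ x * H x ∂ν = ∫⁻ x, H x ∂(ν.withDensity Y₁) := by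
    rw [lintegral_withDensity_eq_lintegral_mul ν hY₁ hHm]; rfl
  have h2 : ∫⁻ x, Y₂ x * H x ∂ν = ∫⁻ x, H x ∂(ν.withDensity Y₂) := by
    rw [lintegral_withDensity_eq_lintegral_mul ν hY₂ hHm]; rfl
  rw [h1, h2, ← lintegral_trim hG hH, ← lintegral_trim hG hH]
  congr 1
  refine Measure.ext fun s hs => ?_
  rw [trim_measurableSet_eq hG hs, trim_measurableSet_eq hG hs,
    withDensity_apply _ (hG s hs), withDensity_apply _ (hG s hs)]
  exact heq s hs

lemma infoDiv_withDensity_eq {Ω : Type*} [mΩ : MeasurableSpace Ω] (ν : Measure Ω)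
    (Y₁ Y₂ : Ω → ℝ≥0∞) (h₁ : Measurable[mΩ] Y₁) (h₂ : Measurable[mΩ] Y₂)
    (hfin : ∫⁻ x, Y₂ x ∂ν ≠ ∞)
    (hz : ∀ᵐ x ∂ν, Y₂ x = 0 → Y₁ x = 0) :
    infoDiv (ν.withDensity Y₁) (ν.withDensity Y₂)
      = ∫⁻ x, Y₂ x * ENNReal.ofReal ((Y₁ x / Y₂ x).toReal * Real.log (Y₁ x / Y₂ x).toReal
          - (Y₁ x / Y₂ x).toReal + 1) ∂ν := by
  have hfin2 : ∀ᵐ x ∂ν, Y₂ x ≠ ∞ := (ae_lt_top h₂ hfin).mono fun x h => h.ne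
  have hg : Measurable[mΩ] fun x => Y₁ x / Y₂ x := h₁.div h₂
  have hdens : ν.withDensity Y₁ = (ν.withDensity Y₂).withDensity (fun x => Y₁ x / Y₂ x) := by
    rw [← withDensity_mul ν h₂ hg]
    apply withDensity_congr_ae
    filter_upwards [hz, hfin2] with x hzx hfx
    rcases eq_or_ne (Y₂ x) 0 with h0 | h0
    · simp [Pi.mul_apply, h0, hzx h0]
    · exact (ENNReal.mul_div_cancel h0 hfx).symm
  haveI : IsFiniteMeasure (ν.withDensity Y₂) := isFiniteMeasure_withDensity hfin
  have habs : ν.withDensity Y₁ ≪ ν.withDensity Y₂ := by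
    rw [hdens]; exact withDensity_absolutelyContinuous _ _
  have hrn : (ν.withDensity Y₁).rnDeriv (ν.withDensity Y₂)
      =ᵐ[ν.withDensity Y₂] fun x => Y₁ x / Y₂ x := by
    rw [hdens]; exact Measure.rnDeriv_withDensity _ hg
  have hmeas : Measurable[mΩ] fun x => ENNReal.ofReal ((Y₁ x / Y₂ x).toReal
      * Real.log (Y₁ x / Y₂ x).toReal - (Y₁ x / Y₂ x).toReal + 1) := by
    have htr : Measurable[mΩ] fun x => (Y₁ x / Y₂ x).toReal := hg.ennreal_toReal
    exact ENNReal.measurable_ofReal.comp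
      (((htr.mul (Real.measurable_log.comp htr)).sub htr).add measurable_const)
  rw [infoDiv, if_pos habs, lintegral_congr_ae (hrn.mono fun x hx => by rw [hx]),
    lintegral_withDensity_eq_lintegral_mul ν h₂ hmeas]
  rfl

lemma maxPart {Ω : Type*} [mΩ : MeasurableSpace Ω] (ν : Measure Ω) [IsFiniteMeasure ν]
    (k : ℝ≥0∞) (hk0 : k ≠ 0) (hktop : k ≠ ∞)
    (F : ℕ → MeasurableSpace Ω) (hFmono : Monotone F) (hFle : ∀ j, F j ≤ mΩ)
    (Y : ℕ → Ω → ℝ≥0∞) (hYmeas : ∀ j, Measurable[F j] (Y j))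
    (hkY : ∀ j, ∫⁻ x, Y j x ∂ν = k)
    (hYY : ∀ i j, i ≤ j → ∀ A : Set Ω, MeasurableSet[F i] A →
      ∫⁻ x in A, Y j x ∂ν = ∫⁻ x in A, Y i x ∂ν)
    (m n : ℕ) (hmn : m ≤ n) :
    ENNReal.ofReal (scalarDiv k.toReal (∫⁻ x, ⨆ j ∈ Set.Icc m n, Y j x ∂ν).toReal)
      ≤ infoDiv (ν.withDensity (Y n)) (ν.withDensity (Y m)) := by
  have hYm : ∀ j, Measurable[mΩ] (Y j) := fun j => (hYmeas j).mono (hFle j) le_rfl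
  set M : Ω → ℝ≥0∞ := fun x => ⨆ j ∈ Set.Icc m n, Y j x with hMdef
  have hMMmeas : ∀ p, Measurable[mΩ] fun x => ⨆ i ∈ Set.Icc m p, Y i x := fun p =>
    Measurable.biSup _ (Set.to_countable _) fun i _ => hYm i
  have hMmeas : Measurable[mΩ] M := hMMmeas n
  have hBfin : ∫⁻ x, M x ∂ν ≠ ∞ := by
    have hle : ∀ x, M x ≤ ∑ j ∈ Finset.Icc m n, Y j x := fun x =>
      iSup₂_le fun j hj => Finset.single_le_sum (f := fun i => Y i x)
        (fun i _ => zero_le) (Finset.mem_Icc.2 ⟨hj.1, hj.2⟩)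
    have h2 : ∫⁻ x, M x ∂ν ≤ ∑ j ∈ Finset.Icc m n, k := by
      calc ∫⁻ x, M x ∂ν ≤ ∫⁻ x, ∑ j ∈ Finset.Icc m n, Y j x ∂ν := lintegral_mono hle
        _ = ∑ j ∈ Finset.Icc m n, ∫⁻ x, Y j x ∂ν := lintegral_finset_sum _ fun j _ => hYm j
        _ = ∑ j ∈ Finset.Icc m n, k := Finset.sum_congr rfl fun j _ => hkY j
    exact ne_top_of_le_ne_top (by
      rw [Finset.sum_const, nsmul_eq_mul]
      exact ENNReal.mul_ne_top (ENNReal.natCast_ne_top _) hktop) h2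
  set B := ∫⁻ x, M x ∂ν with hBdef
  have hYfinae : ∀ j, ∀ᵐ x ∂ν, Y j x ≠ ∞ := fun j =>
    (ae_lt_top (hYm j) (by rw [hkY j]; exact hktop)).mono fun x h => h.ne
  have hMfinae : ∀ᵐ x ∂ν, M x ≠ ∞ := (ae_lt_top hMmeas hBfin).mono fun x h => h.ne
  have hzero : ∀ j, m ≤ j → ∀ᵐ x ∂ν, Y m x = 0 → Y j x = 0 := by
    intro j hj
    have hEF : MeasurableSet[F m] {x | Y m x = 0} := hYmeas m (measurableSet_singleton 0)
    have hEm : MeasurableSet[mΩ] {x | Y m x = 0} := hFle m _ hEF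
    have h0 : ∫⁻ x in {x | Y m x = 0}, Y m x ∂ν = 0 := by
      have h : ∀ᵐ x ∂ν.restrict {x | Y m x = 0}, Y m x = (fun _ => (0:ℝ≥0∞)) x :=
        (ae_restrict_iff' hEm).2 (ae_of_all _ fun x hx => hx)
      rw [lintegral_congr_ae h, lintegral_zero]
    have hj0 : ∫⁻ x in {x | Y m x = 0}, Y j x ∂ν = 0 := by
      rw [hYY m j hj _ hEF]; exact h0
    have h2 := (lintegral_eq_zero_iff (hYm j)).1 hj0
    exact (ae_restrict_iff' hEm).1 (h2.mono fun x hx => hx)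
  have hk' : 0 < k.toReal := ENNReal.toReal_pos hk0 hktop
  have hkB : k ≤ B := by
    rw [← hkY n]; exact lintegral_mono fun x => le_biSup (f := fun i => Y i x) (Set.mem_Icc.2 ⟨hmn, le_rfl⟩)
  have hkB' : k.toReal ≤ B.toReal := ENNReal.toReal_mono hBfin hkB
  have hB' : 0 < B.toReal := lt_of_lt_of_le hk' hkB'
  set t : ℝ := k.toReal / B.toReal with htdef
  have ht0 : 0 < t := div_pos hk' hB'
  have ht1 : t ≤ 1 := (div_le_one hB').2 hkB'
  have hlogt : 0 ≤ Real.log t⁻¹ := Real.log_nonneg ((one_le_inv₀ ht0).2 ht1)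
  set L : ℕ → Ω → ℝ≥0∞ := fun p x =>
    ENNReal.ofReal (Real.log ((⨆ i ∈ Set.Icc m p, Y i x).toReal / (Y m x).toReal)) with hLdef
  have hLmeas : ∀ p, Measurable[mΩ] (L p) := fun p =>
    ENNReal.measurable_ofReal.comp (Real.measurable_log.comp
      (((hMMmeas p).ennreal_toReal).div ((hYm m).ennreal_toReal)))
  have hMMleM : ∀ p x, p ≤ n → (⨆ i ∈ Set.Icc m p, Y i x) ≤ M x := fun p x hpn =>
    iSup₂_le fun i hi => le_biSup (f := fun i => Y i x) (Set.mem_Icc.2 ⟨hi.1, hi.2.trans hpn⟩)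
  have hYmle : ∀ p x, m ≤ p → Y m x ≤ (⨆ i ∈ Set.Icc m p, Y i x) := fun p x hp =>
    le_biSup (f := fun i => Y i x) (Set.mem_Icc.2 ⟨le_rfl, hp⟩)
  have I2 : ∀ p, m ≤ p → p ≤ n →
      ∫⁻ x, (⨆ i ∈ Set.Icc m p, Y i x) ∂ν ≤ (∫⁻ x, Y n x * L p x ∂ν) + k := by
    intro p hp
    induction p, hp using Nat.le_induction with
    | base =>
      intro _
      have hsing : ∀ x, (⨆ i ∈ Set.Icc m m, Y i x) = Y m x := fun x => by
        rw [Set.Icc_self]; simp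
      calc ∫⁻ x, (⨆ i ∈ Set.Icc m m, Y i x) ∂ν = k := by rw [lintegral_congr hsing, hkY m]
        _ ≤ _ := le_add_self
    | succ j hj ih =>
      intro hjn
      have hjn' : j ≤ n := le_trans (Nat.le_succ j) hjn
      have hmj1 : m ≤ j + 1 := hj.trans (Nat.le_succ j)
      specialize ih hjn'
      have hIcc : Set.Icc m (j+1) = insert (j+1) (Set.Icc m j) := by
        ext i; simp only [Set.mem_Icc, Set.mem_insert_iff]; omega
      have hsup : ∀ x, (⨆ i ∈ Set.Icc m (j+1), Y i x) = Y (j+1) x ⊔ (⨆ i ∈ Set.Icc m j, Y i x) :=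
        fun x => by rw [hIcc, iSup_insert]
      set Δ : Ω → ℝ≥0∞ := fun x =>
        ENNReal.ofReal (Real.log ((⨆ i ∈ Set.Icc m (j+1), Y i x).toReal
          / (⨆ i ∈ Set.Icc m j, Y i x).toReal)) with hΔdef
      have hMMjF : Measurable[F (j+1)] fun x => ⨆ i ∈ Set.Icc m j, Y i x :=
        Measurable.biSup _ (Set.to_countable _) fun i hi =>
          (hYmeas i).mono (hFmono (hi.2.trans (Nat.le_succ j))) le_rfl
      have hMMj1F : Measurable[F (j+1)] fun x => ⨆ i ∈ Set.Icc m (j+1), Y i x :=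
        Measurable.biSup _ (Set.to_countable _) fun i hi => (hYmeas i).mono (hFmono hi.2) le_rfl
      have hΔF : Measurable[F (j+1)] Δ :=
        ENNReal.measurable_ofReal.comp (Real.measurable_log.comp
          ((hMMj1F.ennreal_toReal).div (hMMjF.ennreal_toReal)))
      have hΔm : Measurable[mΩ] Δ := hΔF.mono (hFle _) le_rfl
      have hswap : ∫⁻ x, Y n x * Δ x ∂ν = ∫⁻ x, Y (j+1) x * Δ x ∂ν :=
        mart_eq ν (F (j+1)) (hFle _) (Y n) (Y (j+1)) (hYm n) (hYm (j+1))
          (fun A hA => hYY (j+1) n hjn A hA) Δ hΔF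
      have hstep : ∫⁻ x, (⨆ i ∈ Set.Icc m (j+1), Y i x) ∂ν
          ≤ ∫⁻ x, (Y (j+1) x * Δ x + (⨆ i ∈ Set.Icc m j, Y i x)) ∂ν := by
        refine lintegral_mono_ae ?_
        filter_upwards [hMfinae, hzero (j+1) hmj1, hYfinae (j+1)] with x hMf hz0 hYf
        rw [hsup x]
        rcases le_or_gt (Y (j+1) x) (⨆ i ∈ Set.Icc m j, Y i x) with hle | hlt
        · rw [sup_eq_right.2 hle]; exact le_add_self
        · rw [sup_eq_left.2 hlt.le]
          have hMMjfin : (⨆ i ∈ Set.Icc m j, Y i x) ≠ ∞ :=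
            ne_top_of_le_ne_top hMf (hMMleM j x hjn')
          have hMMjpos : (⨆ i ∈ Set.Icc m j, Y i x) ≠ 0 := by
            intro h0
            have hYm0 : Y m x = 0 := le_antisymm (h0 ▸ hYmle j x hj) (zero_le)
            rw [hz0 hYm0] at hlt
            simp at hlt
          have hv0 : 0 < (⨆ i ∈ Set.Icc m j, Y i x).toReal :=
            ENNReal.toReal_pos hMMjpos hMMjfin
          have huv : (⨆ i ∈ Set.Icc m j, Y i x).toReal < (Y (j+1) x).toReal :=
            (ENNReal.toReal_lt_toReal hMMjfin hYf).2 hlt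
          have hu0 : 0 < (Y (j+1) x).toReal := lt_trans hv0 huv
          have hΔx : Δ x = ENNReal.ofReal
              (Real.log ((Y (j+1) x).toReal / (⨆ i ∈ Set.Icc m j, Y i x).toReal)) := by
            simp only [hΔdef]
            congr 3
            rw [hsup x, sup_eq_left.2 hlt.le]
          have hlog0 : 0 ≤ Real.log ((Y (j+1) x).toReal / (⨆ i ∈ Set.Icc m j, Y i x).toReal) :=
            Real.log_nonneg ((one_le_div hv0).2 huv.le)
          calc Y (j+1) x = ENNReal.ofReal (Y (j+1) x).toReal := (ENNReal.ofReal_toReal hYf).symm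
            _ ≤ ENNReal.ofReal ((Y (j+1) x).toReal
                  * Real.log ((Y (j+1) x).toReal / (⨆ i ∈ Set.Icc m j, Y i x).toReal)
                + (⨆ i ∈ Set.Icc m j, Y i x).toReal) := by
                refine ENNReal.ofReal_le_ofReal ?_
                have := aux_log_ge hu0 hv0
                linarith
            _ = ENNReal.ofReal ((Y (j+1) x).toReal
                  * Real.log ((Y (j+1) x).toReal / (⨆ i ∈ Set.Icc m j, Y i x).toReal))
                + ENNReal.ofReal (⨆ i ∈ Set.Icc m j, Y i x).toReal :=
                ENNReal.ofReal_add (mul_nonneg hu0.le hlog0) ENNReal.toReal_nonneg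
            _ = Y (j+1) x * Δ x + (⨆ i ∈ Set.Icc m j, Y i x) := by
                rw [hΔx, ENNReal.ofReal_mul hu0.le, ENNReal.ofReal_toReal hYf,
                  ENNReal.ofReal_toReal hMMjfin]
      have hsplit : ∀ᵐ x ∂ν, Y n x * L (j+1) x = Y n x * L j x + Y n x * Δ x := by
        filter_upwards [hMfinae, hzero n hmn, hYfinae m] with x hMf hzn hYmf
        rcases eq_or_ne (Y m x) 0 with h0 | h0
        · rw [hzn h0]; simp
        · have h1 : Y m x ≤ (⨆ i ∈ Set.Icc m j, Y i x) := hYmle j x hj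
          have h2 : (⨆ i ∈ Set.Icc m j, Y i x) ≤ (⨆ i ∈ Set.Icc m (j+1), Y i x) := by
            rw [hsup x]; exact le_sup_right
          have hf1 : (⨆ i ∈ Set.Icc m (j+1), Y i x) ≠ ∞ :=
            ne_top_of_le_ne_top hMf (hMMleM _ x hjn)
          have hf2 : (⨆ i ∈ Set.Icc m j, Y i x) ≠ ∞ := ne_top_of_le_ne_top hf1 h2
          have hb0 : 0 < (Y m x).toReal := ENNReal.toReal_pos h0 hYmf
          have hvb : (Y m x).toReal ≤ (⨆ i ∈ Set.Icc m j, Y i x).toReal :=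
            ENNReal.toReal_mono hf2 h1
          have hwv : (⨆ i ∈ Set.Icc m j, Y i x).toReal
              ≤ (⨆ i ∈ Set.Icc m (j+1), Y i x).toReal := ENNReal.toReal_mono hf1 h2
          have hv0 : 0 < (⨆ i ∈ Set.Icc m j, Y i x).toReal := lt_of_lt_of_le hb0 hvb
          have hw0 : 0 < (⨆ i ∈ Set.Icc m (j+1), Y i x).toReal := lt_of_lt_of_le hv0 hwv
          have hlogsplit : Real.log ((⨆ i ∈ Set.Icc m (j+1), Y i x).toReal / (Y m x).toReal)
              = Real.log ((⨆ i ∈ Set.Icc m j, Y i x).toReal / (Y m x).toReal)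
              + Real.log ((⨆ i ∈ Set.Icc m (j+1), Y i x).toReal
                  / (⨆ i ∈ Set.Icc m j, Y i x).toReal) := by
            rw [Real.log_div hw0.ne' hb0.ne', Real.log_div hv0.ne' hb0.ne',
              Real.log_div hw0.ne' hv0.ne']
            ring
          simp only [hLdef, hΔdef]
          rw [hlogsplit, ENNReal.ofReal_add (Real.log_nonneg ((one_le_div hb0).2 hvb))
            (Real.log_nonneg ((one_le_div hv0).2 hwv)), mul_add]
      calc ∫⁻ x, (⨆ i ∈ Set.Icc m (j+1), Y i x) ∂ν
          ≤ ∫⁻ x, (Y (j+1) x * Δ x + (⨆ i ∈ Set.Icc m j, Y i x)) ∂ν := hstep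
        _ = ∫⁻ x, Y (j+1) x * Δ x ∂ν + ∫⁻ x, (⨆ i ∈ Set.Icc m j, Y i x) ∂ν :=
            lintegral_add_left ((hYm (j+1)).mul hΔm) _
        _ ≤ ∫⁻ x, Y (j+1) x * Δ x ∂ν + ((∫⁻ x, Y n x * L j x ∂ν) + k) :=
            add_le_add_right ih _
        _ = ((∫⁻ x, Y n x * L j x ∂ν) + ∫⁻ x, Y n x * Δ x ∂ν) + k := by
            rw [hswap]; ring
        _ = (∫⁻ x, (Y n x * L j x + Y n x * Δ x) ∂ν) + k := by
            rw [lintegral_add_left (f := fun x => Y n x * L j x) ((hYm n).mul (hLmeas j)) _]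
        _ = (∫⁻ x, Y n x * L (j+1) x ∂ν) + k := by
            rw [lintegral_congr_ae hsplit]
  -- identify infoDiv
  set D := infoDiv (ν.withDensity (Y n)) (ν.withDensity (Y m)) with hDdef
  have hD : D = ∫⁻ x, Y m x * ENNReal.ofReal ((Y n x / Y m x).toReal
      * Real.log (Y n x / Y m x).toReal - (Y n x / Y m x).toReal + 1) ∂ν :=
    infoDiv_withDensity_eq ν (Y n) (Y m) (hYm n) (hYm m)
      (by rw [hkY m]; exact hktop) (hzero n hmn)
  have hφmeas : Measurable[mΩ] fun x => ENNReal.ofReal ((Y n x / Y m x).toReal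
      * Real.log (Y n x / Y m x).toReal - (Y n x / Y m x).toReal + 1) := by
    have htr : Measurable[mΩ] fun x => (Y n x / Y m x).toReal :=
      ((hYm n).div (hYm m)).ennreal_toReal
    exact ENNReal.measurable_ofReal.comp
      (((htr.mul (Real.measurable_log.comp htr)).sub htr).add measurable_const)
  have hmain : ∫⁻ x, (Y n x * L n x + Y m x) ∂ν
      ≤ ∫⁻ x, (Y m x * ENNReal.ofReal ((Y n x / Y m x).toReal
          * Real.log (Y n x / Y m x).toReal - (Y n x / Y m x).toReal + 1)
        + (ENNReal.ofReal t * M x + Y n x * ENNReal.ofReal (Real.log t⁻¹))) ∂ν := by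
    refine lintegral_mono_ae ?_
    filter_upwards [hYfinae n, hYfinae m, hMfinae, hzero n hmn] with x hnf hmf hMf hz
    have ha : 0 ≤ (Y n x).toReal := ENNReal.toReal_nonneg
    have hb : 0 ≤ (Y m x).toReal := ENNReal.toReal_nonneg
    have hac : (Y n x).toReal ≤ (M x).toReal :=
      ENNReal.toReal_mono hMf (le_biSup (f := fun i => Y i x) (Set.mem_Icc.2 ⟨hmn, le_rfl⟩))
    have hbc : (Y m x).toReal ≤ (M x).toReal := ENNReal.toReal_mono hMf (hYmle n x hmn)
    have hzz : (Y m x).toReal = 0 → (Y n x).toReal = 0 := by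
      intro h
      have h2 : Y m x = 0 := by
        rcases (ENNReal.toReal_eq_zero_iff _).1 h with h' | h'
        · exact h'
        · exact absurd h' hmf
      rw [hz h2]; simp
    have hcore := core_max ha hac hbc ht0 ht1 hb hzz
    have hφ : (Y m x).toReal * (((Y n x).toReal/(Y m x).toReal)
          * Real.log ((Y n x).toReal/(Y m x).toReal) - ((Y n x).toReal/(Y m x).toReal) + 1)
        = (Y m x).toReal * ((Y n x / Y m x).toReal
            * Real.log (Y n x / Y m x).toReal - (Y n x / Y m x).toReal + 1) := by
      rcases eq_or_ne ((Y m x).toReal) 0 with h0 | h0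
      · rw [h0, zero_mul, zero_mul]
      · rw [ENNReal.toReal_div]
    rw [hφ] at hcore
    have hlogcb : 0 ≤ (Y n x).toReal * Real.log ((M x).toReal / (Y m x).toReal) := by
      rcases eq_or_ne ((Y m x).toReal) 0 with h0 | h0
      · rw [hzz h0, zero_mul]
      · have hb0 : 0 < (Y m x).toReal := lt_of_le_of_ne hb (Ne.symm h0)
        exact mul_nonneg ha (Real.log_nonneg ((one_le_div hb0).2 hbc))
    have hLx : L n x = ENNReal.ofReal (Real.log ((M x).toReal / (Y m x).toReal)) := rfl
    have hlhs : Y n x * L n x + Y m x = ENNReal.ofReal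
        ((Y n x).toReal * Real.log ((M x).toReal / (Y m x).toReal) + (Y m x).toReal) := by
      rw [ENNReal.ofReal_add hlogcb ENNReal.toReal_nonneg, ENNReal.ofReal_mul ha,
        ENNReal.ofReal_toReal hnf, ENNReal.ofReal_toReal hmf, hLx]
    have hφ0 : 0 ≤ (Y n x / Y m x).toReal * Real.log (Y n x / Y m x).toReal
        - (Y n x / Y m x).toReal + 1 := phi_nonneg ENNReal.toReal_nonneg
    have hrhs : Y m x * ENNReal.ofReal ((Y n x / Y m x).toReal
          * Real.log (Y n x / Y m x).toReal - (Y n x / Y m x).toReal + 1)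
        + (ENNReal.ofReal t * M x + Y n x * ENNReal.ofReal (Real.log t⁻¹))
        = ENNReal.ofReal ((Y m x).toReal * ((Y n x / Y m x).toReal
            * Real.log (Y n x / Y m x).toReal - (Y n x / Y m x).toReal + 1)
          + (t * (M x).toReal + (Y n x).toReal * Real.log t⁻¹)) := by
      rw [ENNReal.ofReal_add (mul_nonneg hb hφ0)
          (add_nonneg (mul_nonneg ht0.le ENNReal.toReal_nonneg)
            (mul_nonneg ha hlogt)),
        ENNReal.ofReal_add (mul_nonneg ht0.le ENNReal.toReal_nonneg) (mul_nonneg ha hlogt),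
        ENNReal.ofReal_mul hb, ENNReal.ofReal_mul ht0.le, ENNReal.ofReal_mul ha,
        ENNReal.ofReal_toReal hmf, ENNReal.ofReal_toReal hnf, ENNReal.ofReal_toReal hMf]
    rw [hlhs, hrhs]
    exact ENNReal.ofReal_le_ofReal hcore
  have hint1 : ∫⁻ x, (Y n x * L n x + Y m x) ∂ν = (∫⁻ x, Y n x * L n x ∂ν) + k := by
    rw [lintegral_add_left (f := fun x => Y n x * L n x) ((hYm n).mul (hLmeas n)), hkY m]
  have hint2 : ∫⁻ x, (Y m x * ENNReal.ofReal ((Y n x / Y m x).toReal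
          * Real.log (Y n x / Y m x).toReal - (Y n x / Y m x).toReal + 1)
        + (ENNReal.ofReal t * M x + Y n x * ENNReal.ofReal (Real.log t⁻¹))) ∂ν
      = D + (ENNReal.ofReal t * B + k * ENNReal.ofReal (Real.log t⁻¹)) := by
    rw [lintegral_add_left (f := fun x => Y m x * ENNReal.ofReal ((Y n x / Y m x).toReal
        * Real.log (Y n x / Y m x).toReal - (Y n x / Y m x).toReal + 1)) ((hYm m).mul hφmeas)]
    congr 1
    · exact hD.symm
    · rw [lintegral_add_left (hMmeas.const_mul _)]
      congr 1
      · exact lintegral_const_mul _ hMmeas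
      · rw [lintegral_mul_const _ (hYm n), hkY n]
  have hchain : B ≤ D + (ENNReal.ofReal t * B + k * ENNReal.ofReal (Real.log t⁻¹)) := by
    calc B ≤ (∫⁻ x, Y n x * L n x ∂ν) + k := I2 n hmn le_rfl
      _ = ∫⁻ x, (Y n x * L n x + Y m x) ∂ν := hint1.symm
      _ ≤ _ := hmain
      _ = _ := hint2
  have hs0 : 0 ≤ t * B.toReal + k.toReal * Real.log t⁻¹ :=
    add_nonneg (mul_nonneg ht0.le ENNReal.toReal_nonneg)
      (mul_nonneg ENNReal.toReal_nonneg hlogt)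
  have hsrw : ENNReal.ofReal t * B + k * ENNReal.ofReal (Real.log t⁻¹)
      = ENNReal.ofReal (t * B.toReal + k.toReal * Real.log t⁻¹) := by
    rw [ENNReal.ofReal_add (mul_nonneg ht0.le ENNReal.toReal_nonneg)
        (mul_nonneg ENNReal.toReal_nonneg hlogt),
      ENNReal.ofReal_mul ht0.le, ENNReal.ofReal_mul ENNReal.toReal_nonneg,
      ENNReal.ofReal_toReal hBfin, ENNReal.ofReal_toReal hktop]
  have htB : t * B.toReal = k.toReal := by rw [htdef]; field_simp
  have hsd : scalarDiv k.toReal B.toReal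
      = B.toReal - (t * B.toReal + k.toReal * Real.log t⁻¹) := by
    rw [scalarDiv, ← htdef, Real.log_inv, htB]; ring
  rw [hsd, ENNReal.ofReal_sub _ hs0, tsub_le_iff_right]
  calc ENNReal.ofReal B.toReal = B := ENNReal.ofReal_toReal hBfin
    _ ≤ D + (ENNReal.ofReal t * B + k * ENNReal.ofReal (Real.log t⁻¹)) := hchain
    _ = D + ENNReal.ofReal (t * B.toReal + k.toReal * Real.log t⁻¹) := by rw [hsrw]

lemma minPart {Ω : Type*} [mΩ : MeasurableSpace Ω] (ν : Measure Ω) [IsFiniteMeasure ν]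
    (k : ℝ≥0∞) (hk0 : k ≠ 0) (hktop : k ≠ ∞)
    (F : ℕ → MeasurableSpace Ω) (hFmono : Monotone F) (hFle : ∀ j, F j ≤ mΩ)
    (Y : ℕ → Ω → ℝ≥0∞) (hYmeas : ∀ j, Measurable[F j] (Y j))
    (hkY : ∀ j, ∫⁻ x, Y j x ∂ν = k)
    (hYY : ∀ i j, i ≤ j → ∀ A : Set Ω, MeasurableSet[F i] A →
      ∫⁻ x in A, Y j x ∂ν = ∫⁻ x in A, Y i x ∂ν)
    (m n : ℕ) (hmn : m ≤ n) :
    ENNReal.ofReal (scalarDiv k.toReal (∫⁻ x, ⨅ j ∈ Set.Icc m n, Y j x ∂ν).toReal)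
      ≤ infoDiv (ν.withDensity (Y n)) (ν.withDensity (Y m)) := by
  have hYm : ∀ j, Measurable[mΩ] (Y j) := fun j => (hYmeas j).mono (hFle j) le_rfl
  set N : Ω → ℝ≥0∞ := fun x => ⨅ j ∈ Set.Icc m n, Y j x with hNdef
  set C := ∫⁻ x, N x ∂ν with hCdef
  set D := infoDiv (ν.withDensity (Y n)) (ν.withDensity (Y m)) with hDdef
  have hNle : ∀ x, N x ≤ Y n x := fun x =>
    biInf_le (f := fun i => Y i x) (Set.mem_Icc.2 ⟨hmn, le_rfl⟩)
  have hCk : C ≤ k := by rw [hCdef, ← hkY n]; exact lintegral_mono hNle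
  have hCfin : C ≠ ∞ := ne_top_of_le_ne_top hktop hCk
  have hzero : ∀ j, m ≤ j → ∀ᵐ x ∂ν, Y m x = 0 → Y j x = 0 := by
    intro j hj
    have hEF : MeasurableSet[F m] {x | Y m x = 0} := hYmeas m (measurableSet_singleton 0)
    have hEm : MeasurableSet[mΩ] {x | Y m x = 0} := hFle m _ hEF
    have h0 : ∫⁻ x in {x | Y m x = 0}, Y m x ∂ν = 0 := by
      have h : ∀ᵐ x ∂ν.restrict {x | Y m x = 0}, Y m x = (fun _ => (0:ℝ≥0∞)) x :=
        (ae_restrict_iff' hEm).2 (ae_of_all _ fun x hx => hx)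
      rw [lintegral_congr_ae h, lintegral_zero]
    have hj0 : ∫⁻ x in {x | Y m x = 0}, Y j x ∂ν = 0 := by
      rw [hYY m j hj _ hEF]; exact h0
    have h2 := (lintegral_eq_zero_iff (hYm j)).1 hj0
    exact (ae_restrict_iff' hEm).1 (h2.mono fun x hx => hx)
  have hYfinae : ∀ j, ∀ᵐ x ∂ν, Y j x ≠ ∞ := fun j =>
    (ae_lt_top (hYm j) (by rw [hkY j]; exact hktop)).mono fun x h => h.ne
  have hD : D = ∫⁻ x, Y m x * ENNReal.ofReal ((Y n x / Y m x).toReal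
      * Real.log (Y n x / Y m x).toReal - (Y n x / Y m x).toReal + 1) ∂ν :=
    infoDiv_withDensity_eq ν (Y n) (Y m) (hYm n) (hYm m)
      (by rw [hkY m]; exact hktop) (hzero n hmn)
  have hφmeas : Measurable[mΩ] fun x => ENNReal.ofReal ((Y n x / Y m x).toReal
      * Real.log (Y n x / Y m x).toReal - (Y n x / Y m x).toReal + 1) := by
    have htr : Measurable[mΩ] fun x => (Y n x / Y m x).toReal :=
      ((hYm n).div (hYm m)).ennreal_toReal
    exact ENNReal.measurable_ofReal.comp
      (((htr.mul (Real.measurable_log.comp htr)).sub htr).add measurable_const)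
  rcases eq_or_ne C 0 with hC0 | hC0
  · rw [hC0]
    have hs : scalarDiv k.toReal (0:ℝ≥0∞).toReal ≤ 0 := by
      simp [scalarDiv]
    calc ENNReal.ofReal (scalarDiv k.toReal (0:ℝ≥0∞).toReal) = 0 :=
        ENNReal.ofReal_eq_zero.2 hs
      _ ≤ D := zero_le
  have hk' : 0 < k.toReal := ENNReal.toReal_pos hk0 hktop
  have hC' : 0 < C.toReal := ENNReal.toReal_pos hC0 hCfin
  have hCk' : C.toReal ≤ k.toReal := ENNReal.toReal_mono hktop hCk
  set t : ℝ := k.toReal / C.toReal with htdef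
  have ht1 : 1 ≤ t := (one_le_div hC').2 hCk'
  have ht0 : 0 < t := lt_of_lt_of_le one_pos ht1
  have hlogt : 0 ≤ Real.log t := Real.log_nonneg ht1
  set V := ν Set.univ with hVdef
  have hVfin : V ≠ ∞ := measure_ne_top ν _
  set W := V + ENNReal.ofReal t * V with hWdef
  have hWfin : W ≠ ∞ :=
    ENNReal.add_ne_top.2 ⟨hVfin, ENNReal.mul_ne_top ENNReal.ofReal_ne_top hVfin⟩
  have key : ∀ ε : ℝ, 0 < ε →
      (ENNReal.ofReal (Real.log t) * k + C) + k
        ≤ ((D + ENNReal.ofReal t * C) + ENNReal.ofReal ε * W) + k := by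
    intro ε hε
    set ε' : ℝ≥0∞ := ENNReal.ofReal ε with hε'def
    have hε'top : ε' ≠ ∞ := ENNReal.ofReal_ne_top
    have hε're : ε'.toReal = ε := ENNReal.toReal_ofReal hε.le
    set Q : Ω → ℝ≥0∞ := fun x => Y m x ⊔ ε' with hQdef
    set NN : ℕ → Ω → ℝ≥0∞ := fun p x => (⨅ i ∈ Set.Icc m p, Y i x) ⊔ ε' with hNNdef
    have hNNmeasF : ∀ p q, p ≤ q → Measurable[F q] (NN p) := fun p q hpq =>
      (Measurable.biInf _ (Set.to_countable _) fun i hi =>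
        (hYmeas i).mono (hFmono (hi.2.trans hpq)) le_rfl).sup measurable_const
    have hNNmeas : ∀ p, Measurable[mΩ] (NN p) := fun p =>
      (hNNmeasF p p le_rfl).mono (hFle p) le_rfl
    have hQmeas : Measurable[mΩ] Q := (hYm m).sup measurable_const
    have hNNleQ : ∀ p x, m ≤ p → NN p x ≤ Q x := fun p x hp =>
      sup_le_sup_right (biInf_le (f := fun i => Y i x) (Set.mem_Icc.2 ⟨le_rfl, hp⟩)) _
    have hεleNN : ∀ p x, ε' ≤ NN p x := fun p x => le_sup_right
    set L : ℕ → Ω → ℝ≥0∞ := fun p x =>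
      ENNReal.ofReal (Real.log ((Q x).toReal / (NN p x).toReal)) with hLdef
    have hLmeas : ∀ p, Measurable[mΩ] (L p) := fun p =>
      ENNReal.measurable_ofReal.comp (Real.measurable_log.comp
        ((hQmeas.ennreal_toReal).div ((hNNmeas p).ennreal_toReal)))
    set Kε := ∫⁻ x, Q x ∂ν with hKdef
    set Cε := ∫⁻ x, NN n x ∂ν with hCεdef
    have hKb : Kε ≤ k + ε' * V := by
      calc Kε ≤ ∫⁻ x, (Y m x + ε') ∂ν :=
          lintegral_mono fun x => sup_le le_self_add le_add_self
        _ = k + ε' * V := by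
          rw [lintegral_add_right _ measurable_const, hkY m, lintegral_const]
    have hCb : Cε ≤ C + ε' * V := by
      calc Cε ≤ ∫⁻ x, (N x + ε') ∂ν :=
          lintegral_mono fun x => sup_le le_self_add le_add_self
        _ = C + ε' * V := by
          rw [lintegral_add_right _ measurable_const, lintegral_const]
    have hCC : C ≤ Cε := lintegral_mono fun x => le_sup_left
    have hQfinae : ∀ᵐ x ∂ν, Q x ≠ ∞ := (hYfinae m).mono fun x h =>
      (sup_lt_iff.2 ⟨h.lt_top, hε'top.lt_top⟩).ne
    have I2 : ∀ p, m ≤ p → p ≤ n →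
        (∫⁻ x, Y n x * L p x ∂ν) + ∫⁻ x, NN p x ∂ν ≤ Kε := by
      intro p hp
      induction p, hp using Nat.le_induction with
      | base =>
        intro _
        have hsing : ∀ x, NN m x = Q x := fun x => by
          simp only [hNNdef, hQdef, Set.Icc_self]
          congr 1
          simp
        have hL0 : ∀ x, L m x = 0 := fun x => by
          simp only [hLdef, hsing x]
          rcases eq_or_ne ((Q x).toReal) 0 with h0 | h0
          · simp [h0]
          · simp [div_self h0]
        have h1 : ∫⁻ x, Y n x * L m x ∂ν = 0 := by
          simp only [hL0, mul_zero, lintegral_zero]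
        rw [h1, zero_add, lintegral_congr hsing]
      | succ j hj ih =>
        intro hjn
        have hjn' : j ≤ n := le_trans (Nat.le_succ j) hjn
        have hmj1 : m ≤ j + 1 := hj.trans (Nat.le_succ j)
        specialize ih hjn'
        have hIcc : Set.Icc m (j+1) = insert (j+1) (Set.Icc m j) := by
          ext i; simp only [Set.mem_Icc, Set.mem_insert_iff]; omega
        have hinf : ∀ x, NN (j+1) x = NN j x ⊓ (Y (j+1) x ⊔ ε') := fun x => by
          simp only [hNNdef, hIcc, iInf_insert, sup_inf_right]
          rw [inf_comm]
        set Δ : Ω → ℝ≥0∞ := fun x =>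
          ENNReal.ofReal (Real.log ((NN j x).toReal / (NN (j+1) x).toReal)) with hΔdef
        have hΔF : Measurable[F (j+1)] Δ :=
          ENNReal.measurable_ofReal.comp (Real.measurable_log.comp
            (((hNNmeasF j (j+1) (Nat.le_succ j)).ennreal_toReal).div
              ((hNNmeasF (j+1) (j+1) le_rfl).ennreal_toReal)))
        have hΔm : Measurable[mΩ] Δ := hΔF.mono (hFle _) le_rfl
        have hswap : ∫⁻ x, Y n x * Δ x ∂ν = ∫⁻ x, Y (j+1) x * Δ x ∂ν :=
          mart_eq ν (F (j+1)) (hFle _) (Y n) (Y (j+1)) (hYm n) (hYm (j+1))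
            (fun A hA => hYY (j+1) n hjn A hA) Δ hΔF
        have hstep : ∫⁻ x, (Y (j+1) x * Δ x + NN (j+1) x) ∂ν ≤ ∫⁻ x, NN j x ∂ν := by
          refine lintegral_mono_ae ?_
          filter_upwards [hQfinae] with x hQf
          have hNNjfin : NN j x ≠ ∞ := ne_top_of_le_ne_top hQf (hNNleQ j x hj)
          have hNNj1fin : NN (j+1) x ≠ ∞ := ne_top_of_le_ne_top hQf (hNNleQ (j+1) x hmj1)
          have hεj1 : ε ≤ (NN (j+1) x).toReal := by
            rw [← hε're]; exact ENNReal.toReal_mono hNNj1fin (hεleNN (j+1) x)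
          have hw0 : 0 < (NN (j+1) x).toReal := lt_of_lt_of_le hε hεj1
          rcases le_or_gt (NN j x) (Y (j+1) x ⊔ ε') with hle | hlt
          · have heq : NN (j+1) x = NN j x := by rw [hinf x, inf_eq_left.2 hle]
            have hΔ0 : Δ x = 0 := by
              simp only [hΔdef, heq, div_self (by rw [heq] at hw0; exact hw0.ne' :
                (NN j x).toReal ≠ 0)]
              simp
            rw [heq, hΔ0, mul_zero, zero_add]
          · have heq : NN (j+1) x = Y (j+1) x ⊔ ε' := by rw [hinf x, inf_eq_right.2 hlt.le]
            have hwv : (NN (j+1) x).toReal < (NN j x).toReal :=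
              (ENNReal.toReal_lt_toReal hNNj1fin hNNjfin).2 (heq ▸ hlt)
            have hlog0 : 0 ≤ Real.log ((NN j x).toReal / (NN (j+1) x).toReal) :=
              Real.log_nonneg ((one_le_div hw0).2 hwv.le)
            have hYle : Y (j+1) x ≤ NN (j+1) x := heq ▸ le_sup_left
            calc Y (j+1) x * Δ x + NN (j+1) x
                ≤ NN (j+1) x * Δ x + NN (j+1) x :=
                  add_le_add_left (mul_le_mul_left hYle _) _
              _ = ENNReal.ofReal ((NN (j+1) x).toReal
                    * Real.log ((NN j x).toReal / (NN (j+1) x).toReal)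
                    + (NN (j+1) x).toReal) := by
                  rw [ENNReal.ofReal_add (mul_nonneg hw0.le hlog0) ENNReal.toReal_nonneg,
                    ENNReal.ofReal_mul hw0.le, ENNReal.ofReal_toReal hNNj1fin]
              _ ≤ ENNReal.ofReal (NN j x).toReal := by
                  refine ENNReal.ofReal_le_ofReal ?_
                  have := aux_log_le hw0.le (lt_trans hw0 hwv)
                  linarith
              _ = NN j x := ENNReal.ofReal_toReal hNNjfin
        have hsplit : ∀ᵐ x ∂ν, Y n x * L (j+1) x = Y n x * L j x + Y n x * Δ x := by
          filter_upwards [hQfinae] with x hQf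
          have hNNjfin : NN j x ≠ ∞ := ne_top_of_le_ne_top hQf (hNNleQ j x hj)
          have hNNj1fin : NN (j+1) x ≠ ∞ := ne_top_of_le_ne_top hQf (hNNleQ (j+1) x hmj1)
          have hj1lej : NN (j+1) x ≤ NN j x := by rw [hinf x]; exact inf_le_left
          have hεj1 : ε ≤ (NN (j+1) x).toReal := by
            rw [← hε're]; exact ENNReal.toReal_mono hNNj1fin (hεleNN (j+1) x)
          have hw0 : 0 < (NN (j+1) x).toReal := lt_of_lt_of_le hε hεj1
          have hwv : (NN (j+1) x).toReal ≤ (NN j x).toReal :=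
            ENNReal.toReal_mono hNNjfin hj1lej
          have hv0 : 0 < (NN j x).toReal := lt_of_lt_of_le hw0 hwv
          have hvq : (NN j x).toReal ≤ (Q x).toReal :=
            ENNReal.toReal_mono hQf (hNNleQ j x hj)
          have hq0 : 0 < (Q x).toReal := lt_of_lt_of_le hv0 hvq
          have hlogsplit : Real.log ((Q x).toReal / (NN (j+1) x).toReal)
              = Real.log ((Q x).toReal / (NN j x).toReal)
              + Real.log ((NN j x).toReal / (NN (j+1) x).toReal) := by
            rw [Real.log_div hq0.ne' hw0.ne', Real.log_div hq0.ne' hv0.ne',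
              Real.log_div hv0.ne' hw0.ne']
            ring
          simp only [hLdef, hΔdef]
          rw [hlogsplit, ENNReal.ofReal_add (Real.log_nonneg ((one_le_div hv0).2 hvq))
            (Real.log_nonneg ((one_le_div hw0).2 hwv)), mul_add]
        calc (∫⁻ x, Y n x * L (j+1) x ∂ν) + ∫⁻ x, NN (j+1) x ∂ν
            = ((∫⁻ x, Y n x * L j x ∂ν) + ∫⁻ x, Y n x * Δ x ∂ν) + ∫⁻ x, NN (j+1) x ∂ν := by
              rw [lintegral_congr_ae hsplit, lintegral_add_left (f := fun x => Y n x * L j x) ((hYm n).mul (hLmeas j))]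
          _ = (∫⁻ x, Y n x * L j x ∂ν)
              + ((∫⁻ x, Y (j+1) x * Δ x ∂ν) + ∫⁻ x, NN (j+1) x ∂ν) := by
              rw [hswap]; ring
          _ = (∫⁻ x, Y n x * L j x ∂ν) + ∫⁻ x, (Y (j+1) x * Δ x + NN (j+1) x) ∂ν := by
              rw [lintegral_add_left (f := fun x => Y (j+1) x * Δ x) ((hYm (j+1)).mul hΔm)]
          _ ≤ (∫⁻ x, Y n x * L j x ∂ν) + ∫⁻ x, NN j x ∂ν := add_le_add_right hstep _
          _ ≤ Kε := ih
    have hmain : ∫⁻ x, (ENNReal.ofReal (Real.log t) * Y n x + Y m x) ∂ν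
        ≤ ∫⁻ x, (Y m x * ENNReal.ofReal ((Y n x / Y m x).toReal
            * Real.log (Y n x / Y m x).toReal - (Y n x / Y m x).toReal + 1)
          + (Y n x * L n x + ENNReal.ofReal t * NN n x)) ∂ν := by
      refine lintegral_mono_ae ?_
      filter_upwards [hYfinae n, hYfinae m, hzero n hmn, hQfinae] with x hnf hmf hz hQf
      have ha : 0 ≤ (Y n x).toReal := ENNReal.toReal_nonneg
      have hb : 0 ≤ (Y m x).toReal := ENNReal.toReal_nonneg
      have hNNfin : NN n x ≠ ∞ := ne_top_of_le_ne_top hQf (hNNleQ n x hmn)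
      have hce : ε ≤ (NN n x).toReal := by
        rw [← hε're]; exact ENNReal.toReal_mono hNNfin (hεleNN n x)
      have hcb : (NN n x).toReal ≤ (Q x).toReal := ENNReal.toReal_mono hQf (hNNleQ n x hmn)
      have hbe : (Q x).toReal = max (Y m x).toReal ε := by
        simp only [hQdef]
        rcases le_total (Y m x) ε' with h | h
        · rw [sup_eq_right.2 h, hε're, max_eq_right
            (by rw [← hε're]; exact ENNReal.toReal_mono hε'top h)]
        · rw [sup_eq_left.2 h, max_eq_left
            (by rw [← hε're]; exact ENNReal.toReal_mono hmf h)]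
      have hzz : (Y m x).toReal = 0 → (Y n x).toReal = 0 := by
        intro h
        have h2 : Y m x = 0 := by
          rcases (ENNReal.toReal_eq_zero_iff _).1 h with h' | h'
          · exact h'
          · exact absurd h' hmf
        rw [hz h2]; simp
      have hcore := core_min ha hb hzz ht1 hε hce hcb hbe
      have hφ : (Y m x).toReal * (((Y n x).toReal/(Y m x).toReal)
            * Real.log ((Y n x).toReal/(Y m x).toReal) - ((Y n x).toReal/(Y m x).toReal) + 1)
          = (Y m x).toReal * ((Y n x / Y m x).toReal
              * Real.log (Y n x / Y m x).toReal - (Y n x / Y m x).toReal + 1) := by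
        rcases eq_or_ne ((Y m x).toReal) 0 with h0 | h0
        · rw [h0, zero_mul, zero_mul]
        · rw [ENNReal.toReal_div]
      rw [hφ] at hcore
      have hw0 : 0 < (NN n x).toReal := lt_of_lt_of_le hε hce
      have hlogbe : 0 ≤ Real.log ((Q x).toReal / (NN n x).toReal) :=
        Real.log_nonneg ((one_le_div hw0).2 hcb)
      have hφ0 : 0 ≤ (Y n x / Y m x).toReal * Real.log (Y n x / Y m x).toReal
          - (Y n x / Y m x).toReal + 1 := phi_nonneg ENNReal.toReal_nonneg
      have hlhs : ENNReal.ofReal (Real.log t) * Y n x + Y m x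
          = ENNReal.ofReal ((Y n x).toReal * Real.log t + (Y m x).toReal) := by
        rw [ENNReal.ofReal_add (mul_nonneg ha hlogt) ENNReal.toReal_nonneg,
          mul_comm ((Y n x).toReal) (Real.log t), ENNReal.ofReal_mul hlogt,
          ENNReal.ofReal_toReal hnf, ENNReal.ofReal_toReal hmf]
      have hrhs : Y m x * ENNReal.ofReal ((Y n x / Y m x).toReal
            * Real.log (Y n x / Y m x).toReal - (Y n x / Y m x).toReal + 1)
          + (Y n x * L n x + ENNReal.ofReal t * NN n x)
          = ENNReal.ofReal ((Y m x).toReal * ((Y n x / Y m x).toReal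
              * Real.log (Y n x / Y m x).toReal - (Y n x / Y m x).toReal + 1)
            + ((Y n x).toReal * Real.log ((Q x).toReal / (NN n x).toReal)
              + t * (NN n x).toReal)) := by
        rw [ENNReal.ofReal_add (mul_nonneg hb hφ0)
            (add_nonneg (mul_nonneg ha hlogbe) (mul_nonneg ht0.le ENNReal.toReal_nonneg)),
          ENNReal.ofReal_add (mul_nonneg ha hlogbe) (mul_nonneg ht0.le ENNReal.toReal_nonneg),
          ENNReal.ofReal_mul hb, ENNReal.ofReal_mul ha, ENNReal.ofReal_mul ht0.le,
          ENNReal.ofReal_toReal hmf, ENNReal.ofReal_toReal hnf, ENNReal.ofReal_toReal hNNfin]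
      rw [hlhs, hrhs]
      exact ENNReal.ofReal_le_ofReal hcore
    have hint1 : ∫⁻ x, (ENNReal.ofReal (Real.log t) * Y n x + Y m x) ∂ν
        = ENNReal.ofReal (Real.log t) * k + k := by
      rw [lintegral_add_left ((hYm n).const_mul _), lintegral_const_mul _ (hYm n), hkY n, hkY m]
    have hint2 : ∫⁻ x, (Y m x * ENNReal.ofReal ((Y n x / Y m x).toReal
            * Real.log (Y n x / Y m x).toReal - (Y n x / Y m x).toReal + 1)
          + (Y n x * L n x + ENNReal.ofReal t * NN n x)) ∂ν
        = D + ((∫⁻ x, Y n x * L n x ∂ν) + ENNReal.ofReal t * Cε) := by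
      rw [lintegral_add_left (f := fun x => Y m x * ENNReal.ofReal ((Y n x / Y m x).toReal
        * Real.log (Y n x / Y m x).toReal - (Y n x / Y m x).toReal + 1)) ((hYm m).mul hφmeas)]
      congr 1
      · exact hD.symm
      · rw [lintegral_add_left (f := fun x => Y n x * L n x) ((hYm n).mul (hLmeas n))]
        congr 1
        exact lintegral_const_mul _ (hNNmeas n)
    have hL2 : (∫⁻ x, Y n x * L n x ∂ν) + Cε ≤ Kε := I2 n hmn le_rfl
    calc (ENNReal.ofReal (Real.log t) * k + C) + k
        = (ENNReal.ofReal (Real.log t) * k + k) + C := by ring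
      _ ≤ (ENNReal.ofReal (Real.log t) * k + k) + Cε := add_le_add_right hCC _
      _ = ∫⁻ x, (ENNReal.ofReal (Real.log t) * Y n x + Y m x) ∂ν + Cε := by rw [hint1]
      _ ≤ ∫⁻ x, (Y m x * ENNReal.ofReal ((Y n x / Y m x).toReal
            * Real.log (Y n x / Y m x).toReal - (Y n x / Y m x).toReal + 1)
          + (Y n x * L n x + ENNReal.ofReal t * NN n x)) ∂ν + Cε := add_le_add_left hmain _
      _ = (D + ((∫⁻ x, Y n x * L n x ∂ν) + ENNReal.ofReal t * Cε)) + Cε := by rw [hint2]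
      _ = (D + ENNReal.ofReal t * Cε) + ((∫⁻ x, Y n x * L n x ∂ν) + Cε) := by ring
      _ ≤ (D + ENNReal.ofReal t * Cε) + Kε := add_le_add_right hL2 _
      _ ≤ (D + ENNReal.ofReal t * (C + ε' * V)) + (k + ε' * V) :=
          add_le_add (add_le_add_right (mul_le_mul_right hCb _) _) hKb
      _ = ((D + ENNReal.ofReal t * C) + ε' * W) + k := by
          simp only [hWdef]
          ring
  have key2 : ENNReal.ofReal (Real.log t) * k + C ≤ D + ENNReal.ofReal t * C := by
    refine ENNReal.le_of_forall_pos_le_add fun δ hδ _ => ?_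
    have hδ0 : (0:ℝ) < (δ:ℝ) := by exact_mod_cast hδ
    have hW0 : 0 ≤ W.toReal := ENNReal.toReal_nonneg
    set ε : ℝ := (δ : ℝ) / (W.toReal + 1) with hεdef
    have hε : 0 < ε := div_pos hδ0 (by positivity)
    have h1 := key ε hε
    rw [ENNReal.add_le_add_iff_right hktop] at h1
    refine le_trans h1 (add_le_add_right ?_ _)
    calc ENNReal.ofReal ε * W = ENNReal.ofReal ε * ENNReal.ofReal W.toReal := by
          rw [ENNReal.ofReal_toReal hWfin]
      _ = ENNReal.ofReal (ε * W.toReal) := (ENNReal.ofReal_mul hε.le).symm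
      _ ≤ ENNReal.ofReal (δ : ℝ) := ENNReal.ofReal_le_ofReal (by
          rw [hεdef, div_mul_eq_mul_div, div_le_iff₀ (by positivity)]
          nlinarith)
      _ = (δ : ℝ≥0∞) := ENNReal.ofReal_coe_nnreal
  have htC : t * C.toReal = k.toReal := by rw [htdef]; field_simp
  have hsd : scalarDiv k.toReal C.toReal
      = (k.toReal * Real.log t + C.toReal) - t * C.toReal := by
    rw [scalarDiv, ← htdef, htC]; ring
  rw [hsd, ENNReal.ofReal_sub _ (mul_nonneg ht0.le ENNReal.toReal_nonneg), tsub_le_iff_right]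
  have h3 : ENNReal.ofReal (k.toReal * Real.log t + C.toReal)
      = ENNReal.ofReal (Real.log t) * k + C := by
    rw [ENNReal.ofReal_add (mul_nonneg ENNReal.toReal_nonneg hlogt) ENNReal.toReal_nonneg,
      mul_comm (k.toReal) (Real.log t), ENNReal.ofReal_mul hlogt,
      ENNReal.ofReal_toReal hktop, ENNReal.ofReal_toReal hCfin]
  have h4 : ENNReal.ofReal (t * C.toReal) = ENNReal.ofReal t * C := by
    rw [ENNReal.ofReal_mul ht0.le, ENNReal.ofReal_toReal hCfin]
  rw [h3, h4]
  exact key2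

/-- If `Yⱼ` are conditional densities of `μ = ν.withDensity ρ` given the increasing
sub-σ-algebras `F₁ ⊆ ⋯ ⊆ Fₙ`, `μⱼ := ν.withDensity Yⱼ` and `k := μ(Ω) > 0`, then
`d(k ‖ ∫ Y_{m,n}^max dν) ≤ D(μₙ‖μₘ)` and `d(k ‖ ∫ Y_{m,n}^min dν) ≤ D(μₙ‖μₘ)`. -/
theorem min_max_divergence_bound
    {Ω : Type*} [mΩ : MeasurableSpace Ω] (ν : Measure Ω) [IsFiniteMeasure ν]
    (ρ : Ω → ℝ≥0∞) (hρ : Measurable ρ)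
    (μ : Measure Ω) (hμ : μ = ν.withDensity ρ) [IsFiniteMeasure μ]
    (hfin : infoDiv μ ν < ∞)
    (k : ℝ≥0∞) (hk : k = μ Set.univ) (hkpos : 0 < k)
    (n : ℕ) (F : ℕ → MeasurableSpace Ω) (hFmono : Monotone F) (hFle : ∀ j, F j ≤ mΩ)
    (Y : ℕ → Ω → ℝ≥0∞) (hYmeas : ∀ j, Measurable[F j] (Y j))
    (hY : ∀ j, ∀ A : Set Ω, MeasurableSet[F j] A → ∫⁻ x in A, Y j x ∂ν = μ A)
    (m : ℕ) (hm : 1 ≤ m) (hmn : m ≤ n) :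
    ENNReal.ofReal (scalarDiv k.toReal
        (∫⁻ x, ⨆ j ∈ Set.Icc m n, Y j x ∂ν).toReal)
      ≤ @infoDiv Ω mΩ (ν.withDensity (Y n)) (ν.withDensity (Y m)) ∧
    ENNReal.ofReal (scalarDiv k.toReal
        (∫⁻ x, ⨅ j ∈ Set.Icc m n, Y j x ∂ν).toReal)
      ≤ @infoDiv Ω mΩ (ν.withDensity (Y n)) (ν.withDensity (Y m)) := by
  have hk0 : k ≠ 0 := hkpos.ne'
  have hktop : k ≠ ∞ := by rw [hk]; exact measure_ne_top μ _
  have hkY : ∀ j, ∫⁻ x, Y j x ∂ν = k := fun j => by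
    rw [← setLIntegral_univ, hY j Set.univ MeasurableSet.univ, hk]
  have hYY : ∀ i j, i ≤ j → ∀ A : Set Ω, MeasurableSet[F i] A →
      ∫⁻ x in A, Y j x ∂ν = ∫⁻ x in A, Y i x ∂ν := fun i j hij A hA => by
    rw [hY j A (hFmono hij A hA), hY i A hA]
  exact ⟨maxPart ν k hk0 hktop F hFmono hFle Y hYmeas hkY hYY m n hmn,
    minPart ν k hk0 hktop F hFmono hFle Y hYmeas hkY hYY m n hmn⟩
end

section
/- Let ν be a finite measure on (Ω, 𝒜) and let μ = ν.withDensity ρ be a finite measure with D(μ‖ν) < ∞. Let (F_n) be an increasing sequence of sub-σ-algebras of 𝒜 and let Y_n be a conditional density of μ given F_n with respect to ν. If D(ν.withDensity Y_n ‖ ν) → D(μ‖ν) as n → ∞, then the sequence (Y_n) converges ν-almost everywhere to ρ, i.e. the conditional densities converge pointwise a.e. to a Radon–Nikodym derivative of μ with respect to ν. -/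
open MeasureTheory Filter Topology ENNReal

noncomputable def phi0 (t : ℝ) : ℝ := t * Real.log t - t + 1

lemma phi0_continuous : Continuous phi0 :=
  (Real.continuous_mul_log.sub continuous_id).add continuous_const

lemma phi0_tangent_le {q t : ℝ} (hq : 0 < q) (ht : 0 ≤ t) :
    Real.log q * (t - q) + phi0 q ≤ phi0 t := by
  rcases eq_or_lt_of_le ht with h | h
  · simp [phi0, ← h, Real.log_zero]
    nlinarith [Real.log_nonpos (le_of_lt hq) , hq]
  · have hlog := Real.log_le_sub_one_of_pos (show (0:ℝ) < q / t from div_pos hq h)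
    rw [Real.log_div (ne_of_gt hq) (ne_of_gt h)] at hlog
    have h2 : t * (q / t) = q := by field_simp
    have h3 := mul_le_mul_of_nonneg_left hlog (le_of_lt h)
    simp only [phi0]
    nlinarith [h3, h2]

lemma phi0_nonneg {t : ℝ} (ht : 0 ≤ t) : 0 ≤ phi0 t := by
  have := phi0_tangent_le (q := 1) one_pos ht
  simp [phi0] at this ⊢
  linarith

lemma phi0_midpoint_le {a b : ℝ} (ha : 0 ≤ a) (hb : 0 ≤ b) :
    phi0 ((a + b) / 2) ≤ (phi0 a + phi0 b) / 2 := by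
  have h := Real.convexOn_mul_log.2 ha hb (by norm_num : (0:ℝ) ≤ 1/2)
    (by norm_num : (0:ℝ) ≤ 1/2) (by norm_num)
  simp only [smul_eq_mul] at h
  have : (1/2 : ℝ) * a + (1/2) * b = (a+b)/2 := by ring
  rw [this] at h
  simp only [phi0]; linarith

lemma phi0_midpoint_lt {a b : ℝ} (ha : 0 ≤ a) (hb : 0 ≤ b) (hab : a ≠ b) :
    phi0 ((a + b) / 2) < (phi0 a + phi0 b) / 2 := by
  have h := Real.strictConvexOn_mul_log.2 ha hb hab (by norm_num : (0:ℝ) < 1/2)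
    (by norm_num : (0:ℝ) < 1/2) (by norm_num)
  simp only [smul_eq_mul] at h
  have : (1/2 : ℝ) * a + (1/2) * b = (a+b)/2 := by ring
  rw [this] at h
  simp only [phi0]; linarith

lemma phi0_le_of_forall_tangent {w g : ℝ} (hw : 0 ≤ w)
    (h : ∀ q : ℚ, 0 < (q:ℝ) → Real.log q * (w - q) + phi0 q ≤ g) : phi0 w ≤ g := by
  rcases eq_or_lt_of_le hw with h0 | hpos
  · -- w = 0
    have : phi0 w = 1 := by simp [phi0, ← h0]
    rw [this]
    refine le_of_forall_pos_le_add fun ε hε => ?_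
    obtain ⟨q, hq0, hqε⟩ := exists_rat_btwn (show (0:ℝ) < min ε 1 by positivity)
    have hq0' : 0 < (q:ℝ) := hq0
    have := h q hq0'
    have hval : Real.log q * (w - q) + phi0 q = 1 - q := by
      simp [phi0, ← h0]; ring
    rw [hval] at this
    have : (1:ℝ) - ε ≤ g := by
      have hqe : (q:ℝ) < ε := lt_of_lt_of_le hqε (min_le_left _ _)
      linarith
    linarith
  · -- w > 0 : take rationals qₙ → w from above
    have hseq : ∀ n : ℕ, ∃ q : ℚ, w < (q:ℝ) ∧ (q:ℝ) < w + 1/(n+1) := by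
      intro n
      have hp : (0:ℝ) < 1/(n+1) := by positivity
      exact_mod_cast exists_rat_btwn (show w < w + 1/(n+1) by linarith)
    choose q hq1 hq2 using hseq
    have hqpos : ∀ n, 0 < ((q n : ℝ)) := fun n => lt_trans hpos (hq1 n)
    have htend : Tendsto (fun n => ((q n : ℝ))) atTop (𝓝 w) := by
      refine tendsto_of_tendsto_of_tendsto_of_le_of_le (tendsto_const_nhds)
        ?_ (fun n => (hq1 n).le) (fun n => (hq2 n).le)
      have : Tendsto (fun n : ℕ => w + 1/(n+1:ℝ)) atTop (𝓝 (w + 0)) :=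
        tendsto_const_nhds.add (tendsto_one_div_add_atTop_nhds_zero_nat)
      simpa using this
    have hcont : ContinuousAt (fun s : ℝ => Real.log s * (w - s) + phi0 s) w := by
      have h1 : ContinuousAt Real.log w := Real.continuousAt_log (ne_of_gt hpos)
      exact ((h1.mul (continuousAt_const.sub continuousAt_id)).add
        (phi0_continuous.continuousAt))
    have hlim : Tendsto (fun n => Real.log (q n) * (w - q n) + phi0 (q n)) atTop
        (𝓝 (Real.log w * (w - w) + phi0 w)) := (hcont.tendsto).comp htend
    have : Real.log w * (w - w) + phi0 w = phi0 w := by ring_nf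
    rw [this] at hlim
    exact le_of_tendsto hlim (Eventually.of_forall fun n => h (q n) (hqpos n))

lemma integral_phi0_condexp_le {Ω : Type*} [mΩ : MeasurableSpace Ω]
    (ν : Measure Ω) [IsFiniteMeasure ν]
    {m : MeasurableSpace Ω} (hm : m ≤ mΩ)
    {Z : Ω → ℝ} (hZint : Integrable Z ν) (hZ0 : 0 ≤ᵐ[ν] Z)
    (hφZ : Integrable (fun x => phi0 (Z x)) ν) :
    ∫⁻ x, ENNReal.ofReal (phi0 ((ν[Z|m]) x)) ∂ν ≤ ENNReal.ofReal (∫ x, phi0 (Z x) ∂ν) := by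
  set W := ν[Z|m] with hW
  set G := ν[fun x => phi0 (Z x)|m] with hG
  have hW0 : 0 ≤ᵐ[ν] W := condExp_nonneg hZ0
  -- tangent inequality after conditioning, for each rational q
  have key : ∀ q : ℚ, 0 < (q:ℝ) →
      ∀ᵐ x ∂ν, Real.log q * (W x - q) + phi0 q ≤ G x := by
    intro q hq
    set c : ℝ := phi0 q - Real.log q * q with hc
    have haff : ν[fun x => Real.log q * Z x + c|m] =ᵐ[ν]
        (fun x => Real.log q * (W x - q) + phi0 q) := by
      have h1 : ν[fun x => Real.log q * Z x + c|m] =ᵐ[ν]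
          (fun x => (ν[fun x => Real.log q * Z x|m]) x + (ν[fun _ : Ω => c|m]) x) :=
        condExp_add (hZint.const_mul _) (integrable_const c) m
      have h2 : ν[fun x => Real.log q * Z x|m] =ᵐ[ν] fun x => Real.log q * W x := by
        have := condExp_smul (μ := ν) (m := m) (Real.log q) Z
        simpa [smul_eq_mul, hW, Pi.smul_def] using this
      have h3 : ν[fun _ : Ω => c|m] = fun _ => c := condExp_const hm c
      rw [h3] at h1
      filter_upwards [h1, h2] with x e1 e2
      rw [e1, e2, hc]; ring
    have hmono : ν[fun x => Real.log q * Z x + c|m] ≤ᵐ[ν] G := by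
      refine condExp_mono ((hZint.const_mul _).add (integrable_const c)) hφZ ?_
      filter_upwards [hZ0] with x hx
      have := phi0_tangent_le (q := (q:ℝ)) hq hx
      simp only [hc]; linarith
    filter_upwards [haff, hmono] with x e1 e2
    rw [← e1]; exact e2
  have key' : ∀ᵐ x ∂ν, phi0 (W x) ≤ G x := by
    have hall : ∀ᵐ x ∂ν, ∀ q : ℚ, 0 < (q:ℝ) →
        Real.log q * (W x - q) + phi0 q ≤ G x := by
      rw [ae_all_iff]
      intro q
      by_cases hq : 0 < (q:ℝ)
      · filter_upwards [key q hq] with x hx _; exact hx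
      · filter_upwards with x hx; exact absurd hx hq
    filter_upwards [hall, hW0] with x hx hx0
    exact phi0_le_of_forall_tangent hx0 hx
  have hφW_int : Integrable (fun x => phi0 (W x)) ν := by
    refine Integrable.mono' (integrable_condExp (m := m) (f := fun x => phi0 (Z x)) (μ := ν))
      (phi0_continuous.comp_aestronglyMeasurable
        ((stronglyMeasurable_condExp.mono hm).aestronglyMeasurable)) ?_
    filter_upwards [key', hW0] with x h1 h0
    rw [Real.norm_eq_abs, abs_of_nonneg (phi0_nonneg h0)]; exact h1
  have h1 : ∫⁻ x, ENNReal.ofReal (phi0 (W x)) ∂ν = ENNReal.ofReal (∫ x, phi0 (W x) ∂ν) := by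
    refine (ofReal_integral_eq_lintegral_ofReal hφW_int ?_).symm
    filter_upwards [hW0] with x h0; exact phi0_nonneg h0
  rw [h1]
  refine ENNReal.ofReal_le_ofReal ?_
  calc ∫ x, phi0 (W x) ∂ν ≤ ∫ x, G x ∂ν := integral_mono_ae hφW_int integrable_condExp key'
    _ = ∫ x, phi0 (Z x) ∂ν := integral_condExp hm

lemma infoDiv_withDensity {Ω : Type*} [MeasurableSpace Ω] (ν : Measure Ω) [SigmaFinite ν]
    {w : Ω → ℝ≥0∞} (hw : Measurable w) :
    infoDiv (ν.withDensity w) ν = ∫⁻ x, ENNReal.ofReal (phi0 (w x).toReal) ∂ν := by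
  rw [infoDiv, if_pos (withDensity_absolutelyContinuous ν w)]
  refine lintegral_congr_ae ?_
  filter_upwards [Measure.rnDeriv_withDensity ν hw] with x hx
  rw [hx]; rfl


/-- Radon–Nikodym theorem via information projections: if `Yₙ` are conditional
densities of `μ = ν.withDensity ρ` given an increasing sequence of sub-σ-algebras
`Fₙ` and `D(ν.withDensity Yₙ‖ν) → D(μ‖ν) < ∞`, then `Yₙ → ρ` pointwise
ν-almost everywhere. -/
theorem conditional_densities_tendsto_rnDeriv_ae
    {Ω : Type*} [mΩ : MeasurableSpace Ω] (ν : Measure Ω) [IsFiniteMeasure ν]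
    (ρ : Ω → ℝ≥0∞) (hρ : Measurable ρ)
    (μ : Measure Ω) (hμ : μ = ν.withDensity ρ) [IsFiniteMeasure μ]
    (hfin : infoDiv μ ν < ∞)
    (F : ℕ → MeasurableSpace Ω) (hFmono : Monotone F) (hFle : ∀ n, F n ≤ mΩ)
    (Y : ℕ → Ω → ℝ≥0∞) (hYmeas : ∀ n, Measurable[F n] (Y n))
    (hY : ∀ n, ∀ A : Set Ω, MeasurableSet[F n] A → ∫⁻ x in A, Y n x ∂ν = μ A)
    (hconv : Tendsto (fun n => @infoDiv Ω mΩ (ν.withDensity (Y n)) ν) atTop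
      (𝓝 (@infoDiv Ω mΩ μ ν))) :
    ∀ᵐ x ∂ν, Tendsto (fun n => Y n x) atTop (𝓝 (ρ x)) := by
  classical
  set f : Ω → ℝ := fun x => (ρ x).toReal with hfdef
  have hfmeas : Measurable f := hρ.ennreal_toReal
  have hρ_lint : ∫⁻ x, ρ x ∂ν ≠ ∞ := by
    rw [← setLIntegral_univ, ← withDensity_apply ρ MeasurableSet.univ, ← hμ]
    exact measure_ne_top μ _
  have hρ_lt_top : ∀ᵐ x ∂ν, ρ x < ∞ := ae_lt_top hρ hρ_lint
  have hfint : Integrable f ν := integrable_toReal_of_lintegral_ne_top hρ.aemeasurable hρ_lint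
  have hYm : ∀ n, Measurable (Y n) := fun n => (hYmeas n).mono (hFle n) le_rfl
  have hYlint : ∀ n, ∫⁻ x, Y n x ∂ν ≠ ∞ := by
    intro n
    rw [← setLIntegral_univ, hY n Set.univ MeasurableSet.univ]
    exact measure_ne_top μ _
  have hYfin : ∀ n, ∀ᵐ x ∂ν, Y n x < ∞ := fun n => ae_lt_top (hYm n) (hYlint n)
  have hYint : ∀ n, Integrable (fun x => (Y n x).toReal) ν := fun n =>
    integrable_toReal_of_lintegral_ne_top (hYm n).aemeasurable (hYlint n)
  -- the filtration and the limit σ-algebra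
  set ℱ : Filtration ℕ mΩ := ⟨F, hFmono, hFle⟩ with hℱdef
  have hmsup : (⨆ n, F n) ≤ mΩ := iSup_le hFle
  set g : Ω → ℝ := ν[f | ⨆ n, F n] with hgdef
  have hg0 : 0 ≤ᵐ[ν] g :=
    condExp_nonneg (Eventually.of_forall fun x => ENNReal.toReal_nonneg)
  have hgint : Integrable g ν := integrable_condExp
  -- identification of the conditional densities as conditional expectations
  have hYid : ∀ n, (fun x => (Y n x).toReal) =ᵐ[ν] ν[f|F n] := by
    intro n
    refine ae_eq_condExp_of_forall_setIntegral_eq (hFle n) hfint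
      (fun s _ _ => (hYint n).integrableOn) (fun s hs _ => ?_)
      ((Measurable.stronglyMeasurable ((hYmeas n).ennreal_toReal)).aestronglyMeasurable)
    have h1 : ∫ x in s, (Y n x).toReal ∂ν = (∫⁻ x in s, Y n x ∂ν).toReal :=
      integral_toReal ((hYm n).aemeasurable.restrict) (ae_restrict_of_ae (hYfin n))
    have h2 : ∫ x in s, f x ∂ν = (∫⁻ x in s, ρ x ∂ν).toReal :=
      integral_toReal (hρ.aemeasurable.restrict) (ae_restrict_of_ae hρ_lt_top)
    rw [h1, h2, hY n s hs, hμ, withDensity_apply ρ (hFle n s hs)]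
  have hYid' : ∀ n, (fun x => (Y n x).toReal) =ᵐ[ν] ν[g|F n] := fun n =>
    (hYid n).trans (condExp_condExp_of_le (le_iSup F n) hmsup).symm
  -- Lévy's upward theorem
  have hLevy : ∀ᵐ x ∂ν, Tendsto (fun n => (ν[g|F n]) x) atTop (𝓝 (g x)) := by
    have := Integrable.tendsto_ae_condExp (ℱ := ℱ) (g := g) hgint
      (stronglyMeasurable_condExp (f := f))
    exact this
  have hAE1 : ∀ᵐ x ∂ν, Tendsto (fun n => (Y n x).toReal) atTop (𝓝 (g x)) := by
    have hall : ∀ᵐ x ∂ν, ∀ n, (Y n x).toReal = (ν[g|F n]) x :=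
      ae_all_iff.2 fun n => hYid' n
    filter_upwards [hall, hLevy] with x h1 h2
    exact h2.congr fun n => (h1 n).symm
  -- information divergence identities
  have hDE : infoDiv μ ν = ∫⁻ x, ENNReal.ofReal (phi0 (f x)) ∂ν := by
    rw [hμ, infoDiv_withDensity ν hρ]
  have hφf_nn : ∀ x, 0 ≤ phi0 (f x) := fun x => phi0_nonneg ENNReal.toReal_nonneg
  have hφf_int : Integrable (fun x => phi0 (f x)) ν := by
    refine ⟨(phi0_continuous.measurable.comp hfmeas).aestronglyMeasurable, ?_⟩
    rw [hasFiniteIntegral_iff_ofReal (Eventually.of_forall hφf_nn)]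
    rw [← hDE]; exact hfin
  set Dr : ℝ := ∫ x, phi0 (f x) ∂ν with hDrdef
  have hDr_nn : 0 ≤ Dr := integral_nonneg hφf_nn
  have hDrE : ENNReal.ofReal Dr = infoDiv μ ν := by
    rw [hDE]
    exact ofReal_integral_eq_lintegral_ofReal hφf_int (Eventually.of_forall hφf_nn)
  -- Fatou: the divergence of the limit g is at most the limit of the divergences
  have hFatou : ∫⁻ x, ENNReal.ofReal (phi0 (g x)) ∂ν ≤ infoDiv μ ν := by
    have hmeasn : ∀ n, Measurable fun x => ENNReal.ofReal (phi0 ((Y n x).toReal)) := fun n =>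
      (ENNReal.continuous_ofReal.comp phi0_continuous).measurable.comp (hYm n).ennreal_toReal
    have heq : (fun x => ENNReal.ofReal (phi0 (g x))) =ᵐ[ν]
        fun x => liminf (fun n => ENNReal.ofReal (phi0 ((Y n x).toReal))) atTop := by
      filter_upwards [hAE1] with x hx
      exact (((ENNReal.continuous_ofReal.comp phi0_continuous).tendsto _).comp hx).liminf_eq.symm
    calc ∫⁻ x, ENNReal.ofReal (phi0 (g x)) ∂ν
        = ∫⁻ x, liminf (fun n => ENNReal.ofReal (phi0 ((Y n x).toReal))) atTop ∂ν :=
          lintegral_congr_ae heq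
      _ ≤ liminf (fun n => ∫⁻ x, ENNReal.ofReal (phi0 ((Y n x).toReal)) ∂ν) atTop :=
          lintegral_liminf_le hmeasn
      _ = liminf (fun n => infoDiv (ν.withDensity (Y n)) ν) atTop := by
          refine liminf_congr (Eventually.of_forall fun n => ?_)
          rw [infoDiv_withDensity ν (hYm n)]
      _ = infoDiv μ ν := hconv.liminf_eq
  have hφg_nn : ∀ᵐ x ∂ν, 0 ≤ phi0 (g x) := by
    filter_upwards [hg0] with x hx; exact phi0_nonneg hx
  have hgmeas : AEStronglyMeasurable g ν :=
    (stronglyMeasurable_condExp.mono hmsup).aestronglyMeasurable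
  have hφg_int : Integrable (fun x => phi0 (g x)) ν := by
    refine ⟨phi0_continuous.comp_aestronglyMeasurable hgmeas, ?_⟩
    rw [hasFiniteIntegral_iff_ofReal hφg_nn]
    exact lt_of_le_of_lt hFatou hfin
  set Gr : ℝ := ∫ x, phi0 (g x) ∂ν with hGrdef
  have hGr_nn : 0 ≤ Gr := integral_nonneg_of_ae hφg_nn
  have hGr_le_Dr : Gr ≤ Dr := by
    have h1 : ENNReal.ofReal Gr ≤ ENNReal.ofReal Dr := by
      rw [hDrE, hGrdef, ofReal_integral_eq_lintegral_ofReal hφg_int hφg_nn]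
      exact hFatou
    exact (ofReal_le_ofReal_iff hDr_nn).1 h1
  -- the midpoint function
  set Z : Ω → ℝ := fun x => (2⁻¹ : ℝ) * (f x + g x) with hZdef
  have hZint : Integrable Z ν := by
    have := (hfint.add hgint).const_mul (2⁻¹ : ℝ)
    exact this
  have hZ0 : 0 ≤ᵐ[ν] Z := by
    filter_upwards [hg0] with x hx
    have hx' : (0:ℝ) ≤ g x := hx
    have h0f : (0:ℝ) ≤ f x := ENNReal.toReal_nonneg
    show (0:ℝ) ≤ 2⁻¹ * (f x + g x)
    nlinarith
  have hφZ_bound : ∀ᵐ x ∂ν, phi0 (Z x) ≤ (phi0 (f x) + phi0 (g x)) / 2 := by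
    filter_upwards [hg0] with x hx
    have hx' : (0:ℝ) ≤ g x := hx
    have h := phi0_midpoint_le (a := f x) (b := g x) ENNReal.toReal_nonneg hx'
    have e : (2⁻¹ : ℝ) * (f x + g x) = (f x + g x) / 2 := by ring
    rw [hZdef]; simp only [e]; exact h
  have hbound_int : Integrable (fun x => (phi0 (f x) + phi0 (g x)) / 2) ν :=
    (hφf_int.add hφg_int).div_const 2
  have hφZ_int : Integrable (fun x => phi0 (Z x)) ν := by
    refine Integrable.mono' hbound_int
      (phi0_continuous.comp_aestronglyMeasurable hZint.1) ?_
    filter_upwards [hφZ_bound, hZ0] with x h1 h0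
    rw [Real.norm_eq_abs, abs_of_nonneg (phi0_nonneg h0)]; exact h1
  set DZ : ℝ := ∫ x, phi0 (Z x) ∂ν with hDZdef
  have hDZ_nn : 0 ≤ DZ := by
    refine integral_nonneg_of_ae ?_
    filter_upwards [hZ0] with x hx; exact phi0_nonneg hx
  -- identification of `Y n` with the conditional expectation of `Z`
  have hZid : ∀ n, ν[Z|F n] =ᵐ[ν] fun x => (Y n x).toReal := by
    intro n
    have he1 : ν[Z|F n] =ᵐ[ν] (2⁻¹ : ℝ) • ν[f + g|F n] :=
      condExp_smul (μ := ν) (m := F n) (2⁻¹ : ℝ) (f + g)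
    have he2 : ν[f + g|F n] =ᵐ[ν] ν[f|F n] + ν[g|F n] := condExp_add hfint hgint (F n)
    have he3 : ν[g|F n] =ᵐ[ν] ν[f|F n] := by
      have h4 := hYid' n
      have h5 := hYid n
      exact (h4.symm.trans h5)
    filter_upwards [he1, he2, he3, hYid n] with x e1 e2 e3 e4
    rw [e1, Pi.smul_apply, e2, Pi.add_apply, e3, smul_eq_mul]
    rw [e4]; ring
  -- Jensen: each divergence is dominated by the divergence of the midpoint Z
  have hJen : ∀ n, infoDiv (ν.withDensity (Y n)) ν ≤ ENNReal.ofReal DZ := by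
    intro n
    rw [infoDiv_withDensity ν (hYm n)]
    have hcongr : ∫⁻ x, ENNReal.ofReal (phi0 ((Y n x).toReal)) ∂ν
        = ∫⁻ x, ENNReal.ofReal (phi0 ((ν[Z|F n]) x)) ∂ν := by
      refine lintegral_congr_ae ?_
      filter_upwards [hZid n] with x hx
      rw [hx]
    rw [hcongr]
    exact integral_phi0_condexp_le ν (hFle n) hZint hZ0 hφZ_int
  have hDr_le_DZ : Dr ≤ DZ := by
    have h1 : infoDiv μ ν ≤ ENNReal.ofReal DZ :=
      le_of_tendsto hconv (Eventually.of_forall hJen)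
    rw [← hDrE] at h1
    exact (ofReal_le_ofReal_iff hDZ_nn).1 h1
  have hDZ_le : DZ ≤ (Dr + Gr) / 2 := by
    calc DZ ≤ ∫ x, (phi0 (f x) + phi0 (g x)) / 2 ∂ν :=
          integral_mono_ae hφZ_int hbound_int hφZ_bound
      _ = (Dr + Gr) / 2 := by rw [integral_div, integral_add hφf_int hφg_int]
  have hzero : ∫ x, ((phi0 (f x) + phi0 (g x)) / 2 - phi0 (Z x)) ∂ν = 0 := by
    rw [integral_sub hbound_int hφZ_int, integral_div, integral_add hφf_int hφg_int]
    have : DZ = (Dr + Gr) / 2 := by linarith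
    rw [← hDrdef, ← hGrdef, ← hDZdef]; linarith
  have hae0 : (fun x => (phi0 (f x) + phi0 (g x)) / 2 - phi0 (Z x)) =ᵐ[ν] 0 := by
    refine (integral_eq_zero_iff_of_nonneg_ae ?_ (hbound_int.sub hφZ_int)).1 hzero
    filter_upwards [hφZ_bound] with x hx
    show (0:ℝ) ≤ (phi0 (f x) + phi0 (g x)) / 2 - phi0 (Z x)
    linarith
  have hfg : ∀ᵐ x ∂ν, f x = g x := by
    filter_upwards [hae0, hg0] with x hx hx0
    have hx' : (phi0 (f x) + phi0 (g x)) / 2 - phi0 (Z x) = 0 := hx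
    have hx0' : (0:ℝ) ≤ g x := hx0
    by_contra hne
    have hlt := phi0_midpoint_lt (a := f x) (b := g x) ENNReal.toReal_nonneg hx0' hne
    have hZx : Z x = (f x + g x) / 2 := by
      show (2⁻¹:ℝ) * (f x + g x) = (f x + g x) / 2; ring
    rw [hZx] at hx'
    linarith
  -- conclusion
  filter_upwards [hAE1, hfg, hρ_lt_top, ae_all_iff.2 hYfin] with x h1 h2 h3 h4
  have hρx : ρ x = ENNReal.ofReal (f x) := (ofReal_toReal h3.ne).symm
  rw [hρx]
  have h5 : Tendsto (fun n => ENNReal.ofReal ((Y n x).toReal)) atTop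
      (𝓝 (ENNReal.ofReal (f x))) := by
    refine (ENNReal.continuous_ofReal.tendsto _).comp ?_
    rw [h2]
    exact h1
  exact Tendsto.congr (fun n => ENNReal.ofReal_toReal (h4 n).ne) h5
end

section
/- Let ρ : (0, 1] → ℝ be a non-negative antitone (decreasing) function that is Lebesgue integrable on (0, 1], and suppose ∫₀¹ ρ(s)·max(ln ρ(s), 0) ds = ∞. Then ∫₀¹ (1/x)·(∫₀ˣ ρ(s) ds) dx = ∞; that is, the integral of the maximal function x ↦ (1/x)∫₀ˣ ρ(s) ds of the density ρ is infinite whenever the entropy integral of ρ is infinite. -/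
open MeasureTheory ENNReal

/-- The integral of `1/x` over `[s,1]` equals `-log s`. -/
lemma aux_log_integral {s : ℝ} (hs : s ∈ Set.Ioc (0 : ℝ) 1) :
    ∫⁻ x in Set.Icc s 1, (ENNReal.ofReal x)⁻¹ = ENNReal.ofReal (-Real.log s) := by
  have h1 : ∫⁻ x in Set.Icc s 1, (ENNReal.ofReal x)⁻¹
      = ∫⁻ x in Set.Icc s 1, ENNReal.ofReal x⁻¹ := by
    refine setLIntegral_congr_fun measurableSet_Icc (fun x hx => ?_)
    rw [ENNReal.ofReal_inv_of_pos (lt_of_lt_of_le hs.1 hx.1)]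
  have hcont : ContinuousOn (fun x : ℝ => x⁻¹) (Set.Icc s 1) :=
    ContinuousOn.inv₀ continuousOn_id fun x hx => ne_of_gt (lt_of_lt_of_le hs.1 hx.1)
  have hInt : IntegrableOn (fun x : ℝ => x⁻¹) (Set.Icc s 1) :=
    hcont.integrableOn_Icc
  have hnn : 0 ≤ᵐ[volume.restrict (Set.Icc s 1)] fun x : ℝ => x⁻¹ :=
    (ae_restrict_iff' measurableSet_Icc).2 (Filter.Eventually.of_forall fun x hx =>
      inv_nonneg.2 (le_trans hs.1.le hx.1))
  rw [h1, ← ofReal_integral_eq_lintegral_ofReal hInt hnn]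
  congr 1
  rw [integral_Icc_eq_integral_Ioc, ← intervalIntegral.integral_of_le hs.2,
    integral_inv (by
      rw [Set.uIcc_of_le hs.2]
      intro h
      exact absurd hs.1 (not_lt.2 (Set.mem_Icc.1 h).1)),
    Real.log_div one_ne_zero (ne_of_gt hs.1), Real.log_one, zero_sub]

/-- Tonelli computation: swapping the order of integration in the maximal function
integral of a measurable function gives the `-log` weighted integral. -/
lemma aux_swap (σ : ℝ → ℝ) (hσ : Measurable σ) :
    ∫⁻ x in Set.Ioc (0 : ℝ) 1,
        (ENNReal.ofReal x)⁻¹ * ∫⁻ s in Set.Ioc (0 : ℝ) x, ENNReal.ofReal (σ s)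
      = ∫⁻ s in Set.Ioc (0 : ℝ) 1,
        ENNReal.ofReal (σ s) * ENNReal.ofReal (-Real.log s) := by
  set F : ℝ → ℝ → ℝ≥0∞ := fun x s =>
    if s ≤ x then (ENNReal.ofReal x)⁻¹ * ENNReal.ofReal (σ s) else 0 with hF
  have hFm : Measurable (Function.uncurry F) := by
    refine Measurable.ite (measurableSet_le measurable_snd measurable_fst) ?_ measurable_const
    exact (measurable_fst.ennreal_ofReal.inv).mul ((hσ.comp measurable_snd).ennreal_ofReal)
  have step1 : ∫⁻ x in Set.Ioc (0 : ℝ) 1,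
        (ENNReal.ofReal x)⁻¹ * ∫⁻ s in Set.Ioc (0 : ℝ) x, ENNReal.ofReal (σ s)
      = ∫⁻ x in Set.Ioc (0 : ℝ) 1, ∫⁻ s in Set.Ioc (0 : ℝ) 1, F x s := by
    refine setLIntegral_congr_fun measurableSet_Ioc (fun x hx => ?_)
    have hind : ∀ s : ℝ, F x s
        = Set.indicator (Set.Iic x) (fun s => (ENNReal.ofReal x)⁻¹ * ENNReal.ofReal (σ s)) s := by
      intro s
      by_cases h : s ≤ x <;> simp [hF, h, Set.indicator_apply]
    calc (ENNReal.ofReal x)⁻¹ * ∫⁻ s in Set.Ioc (0 : ℝ) x, ENNReal.ofReal (σ s)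
        = ∫⁻ s in Set.Ioc (0 : ℝ) x, (ENNReal.ofReal x)⁻¹ * ENNReal.ofReal (σ s) := by
          rw [lintegral_const_mul' _ _ (by
            simp only [ne_eq, ENNReal.inv_eq_top]
            exact ne_of_gt (ENNReal.ofReal_pos.2 hx.1))]
      _ = ∫⁻ s in Set.Iic x ∩ Set.Ioc (0 : ℝ) 1,
            (ENNReal.ofReal x)⁻¹ * ENNReal.ofReal (σ s) := by
          rw [show Set.Iic x ∩ Set.Ioc (0:ℝ) 1 = Set.Ioc (0:ℝ) x from Set.ext fun t =>
            ⟨fun ⟨h2, h1, _⟩ => ⟨h1, h2⟩, fun ⟨h1, h2⟩ => ⟨h2, h1, h2.trans hx.2⟩⟩]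
      _ = ∫⁻ s in Set.Ioc (0 : ℝ) 1, F x s := by
          rw [← Measure.restrict_restrict measurableSet_Iic,
            ← lintegral_indicator measurableSet_Iic]
          exact lintegral_congr fun s => (hind s).symm
  have step2 : ∫⁻ x in Set.Ioc (0 : ℝ) 1, ∫⁻ s in Set.Ioc (0 : ℝ) 1, F x s
      = ∫⁻ s in Set.Ioc (0 : ℝ) 1, ∫⁻ x in Set.Ioc (0 : ℝ) 1, F x s :=
    lintegral_lintegral_swap hFm.aemeasurable
  have step3 : ∫⁻ s in Set.Ioc (0 : ℝ) 1, ∫⁻ x in Set.Ioc (0 : ℝ) 1, F x s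
      = ∫⁻ s in Set.Ioc (0 : ℝ) 1,
          ENNReal.ofReal (σ s) * ENNReal.ofReal (-Real.log s) := by
    refine setLIntegral_congr_fun measurableSet_Ioc (fun s hs => ?_)
    have hind : ∀ x : ℝ, F x s
        = Set.indicator (Set.Ici s) (fun x => (ENNReal.ofReal x)⁻¹ * ENNReal.ofReal (σ s)) x := by
      intro x
      by_cases h : s ≤ x <;> simp [hF, h, Set.indicator_apply]
    calc ∫⁻ x in Set.Ioc (0 : ℝ) 1, F x s
        = ∫⁻ x in Set.Ici s ∩ Set.Ioc (0 : ℝ) 1,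
            (ENNReal.ofReal x)⁻¹ * ENNReal.ofReal (σ s) := by
          rw [← Measure.restrict_restrict measurableSet_Ici,
            ← lintegral_indicator measurableSet_Ici]
          exact lintegral_congr fun x => hind x
      _ = ∫⁻ x in Set.Icc s 1, (ENNReal.ofReal x)⁻¹ * ENNReal.ofReal (σ s) := by
          rw [show Set.Ici s ∩ Set.Ioc (0:ℝ) 1 = Set.Icc s 1 from Set.ext fun t =>
            ⟨fun ⟨h1, _, h3⟩ => ⟨h1, h3⟩, fun ⟨h1, h3⟩ => ⟨h1, lt_of_lt_of_le hs.1 h1, h3⟩⟩]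
      _ = (∫⁻ x in Set.Icc s 1, (ENNReal.ofReal x)⁻¹) * ENNReal.ofReal (σ s) :=
          lintegral_mul_const' _ _ ENNReal.ofReal_ne_top
      _ = ENNReal.ofReal (σ s) * ENNReal.ofReal (-Real.log s) := by
          rw [aux_log_integral hs, mul_comm]
  rw [step1, step2, step3]

/-- If `ρ` is non-negative, antitone and Lebesgue integrable on `(0, 1]` and its
entropy integral `∫₀¹ ρ(s)·max(ln ρ(s), 0) ds` is infinite, then the integral of the
maximal function `x ↦ (1/x)∫₀ˣ ρ(s) ds` is infinite. -/
theorem maximal_function_integral_infinite_of_entropy_infinite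
    (ρ : ℝ → ℝ)
    (hnn : ∀ x ∈ Set.Ioc (0 : ℝ) 1, 0 ≤ ρ x)
    (hanti : AntitoneOn ρ (Set.Ioc (0 : ℝ) 1))
    (hint : IntegrableOn ρ (Set.Ioc (0 : ℝ) 1))
    (hent : ∫⁻ s in Set.Ioc (0 : ℝ) 1,
        ENNReal.ofReal (ρ s * max (Real.log (ρ s)) 0) = ∞) :
    ∫⁻ x in Set.Ioc (0 : ℝ) 1,
        (ENNReal.ofReal x)⁻¹ * ∫⁻ s in Set.Ioc (0 : ℝ) x, ENNReal.ofReal (ρ s) = ∞ := by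
  -- a measurable modification of ρ
  have hae : AEMeasurable ρ (volume.restrict (Set.Ioc (0 : ℝ) 1)) :=
    aemeasurable_restrict_of_antitoneOn measurableSet_Ioc hanti
  set ρ' := hae.mk ρ with hρ'
  have hm : Measurable ρ' := hae.measurable_mk
  have he : ρ =ᵐ[volume.restrict (Set.Ioc (0 : ℝ) 1)] ρ' := hae.ae_eq_mk
  -- replace ρ by ρ' in the goal
  have hgoal : ∫⁻ x in Set.Ioc (0 : ℝ) 1,
        (ENNReal.ofReal x)⁻¹ * ∫⁻ s in Set.Ioc (0 : ℝ) x, ENNReal.ofReal (ρ s)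
      = ∫⁻ x in Set.Ioc (0 : ℝ) 1,
        (ENNReal.ofReal x)⁻¹ * ∫⁻ s in Set.Ioc (0 : ℝ) x, ENNReal.ofReal (ρ' s) := by
    refine setLIntegral_congr_fun measurableSet_Ioc (fun x hx => ?_)
    have hle : volume.restrict (Set.Ioc (0 : ℝ) x) ≤ volume.restrict (Set.Ioc (0 : ℝ) 1) :=
      Measure.restrict_mono (Set.Ioc_subset_Ioc_right hx.2) le_rfl
    have he' : ρ =ᵐ[volume.restrict (Set.Ioc (0 : ℝ) x)] ρ' := ae_mono hle he
    congr 1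
    exact lintegral_congr_ae (he'.mono fun s h => congrArg ENNReal.ofReal h)
  rw [hgoal, aux_swap ρ' hm]
  -- transfer back and combine ofReal factors
  have h2 : ∫⁻ s in Set.Ioc (0 : ℝ) 1, ENNReal.ofReal (ρ' s) * ENNReal.ofReal (-Real.log s)
      = ∫⁻ s in Set.Ioc (0 : ℝ) 1, ENNReal.ofReal (ρ s * (-Real.log s)) := by
    have h3 : ∫⁻ s in Set.Ioc (0 : ℝ) 1, ENNReal.ofReal (ρ' s) * ENNReal.ofReal (-Real.log s)
        = ∫⁻ s in Set.Ioc (0 : ℝ) 1, ENNReal.ofReal (ρ s) * ENNReal.ofReal (-Real.log s) :=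
      lintegral_congr_ae (he.mono fun s h => by simp only [h])
    rw [h3]
    refine setLIntegral_congr_fun measurableSet_Ioc (fun s hs => ?_)
    rw [ENNReal.ofReal_mul (hnn s hs)]
  rw [h2]
  -- the total mass
  set C : ℝ := ∫ t in Set.Ioc (0 : ℝ) 1, ρ t with hC
  set K : ℝ := max (Real.log C) 0 with hK
  have hK0 : 0 ≤ K := le_max_right _ _
  have hrnn : 0 ≤ᵐ[volume.restrict (Set.Ioc (0 : ℝ) 1)] ρ :=
    (ae_restrict_iff' measurableSet_Ioc).2 (Filter.Eventually.of_forall hnn)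
  -- pointwise bound ρ s * s ≤ C
  have hbd : ∀ s ∈ Set.Ioc (0 : ℝ) 1, ρ s * s ≤ C := by
    intro s hs
    have hsub : Set.Ioc (0 : ℝ) s ⊆ Set.Ioc (0 : ℝ) 1 := Set.Ioc_subset_Ioc_right hs.2
    have hint' : IntegrableOn ρ (Set.Ioc (0 : ℝ) s) := hint.mono_set hsub
    have h1 : ∫ t in Set.Ioc (0 : ℝ) s, ρ s ≤ ∫ t in Set.Ioc (0 : ℝ) s, ρ t := by
      refine setIntegral_mono_on (integrableOn_const (by
        rw [Real.volume_Ioc]; exact ENNReal.ofReal_ne_top)) hint' measurableSet_Ioc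
        fun t ht => hanti (hsub ht) hs ht.2
    have h2 : ∫ t in Set.Ioc (0 : ℝ) s, (ρ s : ℝ) = s * ρ s := by
      rw [setIntegral_const, Real.volume_real_Ioc_of_le hs.1.le, sub_zero,
        smul_eq_mul]
    have h3 : ∫ t in Set.Ioc (0 : ℝ) s, ρ t ≤ C :=
      setIntegral_mono_set hint hrnn (HasSubset.Subset.eventuallyLE hsub)
    calc ρ s * s = s * ρ s := mul_comm _ _
      _ = ∫ t in Set.Ioc (0 : ℝ) s, (ρ s : ℝ) := h2.symm
      _ ≤ ∫ t in Set.Ioc (0 : ℝ) s, ρ t := h1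
      _ ≤ C := h3
  -- pointwise entropy bound
  have hptw : ∀ s ∈ Set.Ioc (0 : ℝ) 1,
      ρ s * max (Real.log (ρ s)) 0 ≤ ρ s * K + ρ s * (-Real.log s) := by
    intro s hs
    have hls : 0 ≤ -Real.log s := by
      have := Real.log_nonpos hs.1.le hs.2
      linarith
    have hmax : max (Real.log (ρ s)) 0 ≤ K + (-Real.log s) := by
      refine max_le ?_ (by positivity)
      rcases eq_or_lt_of_le (hnn s hs) with h0 | hρpos
      · rw [← h0, Real.log_zero]; positivity
      · have hCpos : 0 < C := lt_of_lt_of_le (mul_pos hρpos hs.1) (hbd s hs)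
        have hle : ρ s ≤ C / s := (le_div_iff₀ hs.1).2 (hbd s hs)
        calc Real.log (ρ s) ≤ Real.log (C / s) := Real.log_le_log hρpos hle
          _ = Real.log C - Real.log s := Real.log_div (ne_of_gt hCpos) (ne_of_gt hs.1)
          _ ≤ K + (-Real.log s) := by
              have : Real.log C ≤ K := le_max_left _ _
              linarith
    calc ρ s * max (Real.log (ρ s)) 0 ≤ ρ s * (K + (-Real.log s)) :=
          mul_le_mul_of_nonneg_left hmax (hnn s hs)
      _ = ρ s * K + ρ s * (-Real.log s) := mul_add _ _ _
  -- the finite term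
  have hfin : ∫⁻ s in Set.Ioc (0 : ℝ) 1, ENNReal.ofReal (ρ s * K) ≠ ∞ := by
    have heq : ∫⁻ s in Set.Ioc (0 : ℝ) 1, ENNReal.ofReal (ρ s * K)
        = (∫⁻ s in Set.Ioc (0 : ℝ) 1, ENNReal.ofReal (ρ s)) * ENNReal.ofReal K := by
      rw [← lintegral_mul_const' _ _ ENNReal.ofReal_ne_top]
      exact lintegral_congr fun s => ENNReal.ofReal_mul' hK0
    rw [heq]
    exact ENNReal.mul_ne_top (ne_of_lt hint.lintegral_lt_top) ENNReal.ofReal_ne_top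
  -- conclude
  have hmono : (∞ : ℝ≥0∞) ≤ (∫⁻ s in Set.Ioc (0 : ℝ) 1, ENNReal.ofReal (ρ s * K))
      + ∫⁻ s in Set.Ioc (0 : ℝ) 1, ENNReal.ofReal (ρ s * (-Real.log s)) := by
    rw [← hent, ← lintegral_add_left' ((hint.aemeasurable.mul_const K).ennreal_ofReal)]
    refine lintegral_mono_ae ((ae_restrict_iff' measurableSet_Ioc).2
      (Filter.Eventually.of_forall fun s hs => ?_))
    have hls : 0 ≤ -Real.log s := by
      have := Real.log_nonpos hs.1.le hs.2
      linarith
    calc ENNReal.ofReal (ρ s * max (Real.log (ρ s)) 0)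
        ≤ ENNReal.ofReal (ρ s * K + ρ s * (-Real.log s)) :=
          ENNReal.ofReal_le_ofReal (hptw s hs)
      _ = ENNReal.ofReal (ρ s * K) + ENNReal.ofReal (ρ s * (-Real.log s)) :=
          ENNReal.ofReal_add (by have := hnn s hs; positivity)
            (by have := hnn s hs; positivity)
  by_contra hB
  exact absurd (top_le_iff.1 hmono) (ENNReal.add_ne_top.2 ⟨hfin, hB⟩)
end
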